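/- arXiv:2505.00601 — 4 statements merged into one kernel-verified Lean document; each statement's English description precedes it below -/
import Mathlib

section
/- The spectral radius of T equals 1, and 1 is an eigenvalue of T admitting an eigenfunction in L¹(ν) that is positive ν-a.e.; moreover any two eigenfunctions of T for the eigenvalue 1 are ν-a.e. proportional. If in addition 0 < ∫_{ℝ₊×Θ} λ(a,θ) S(θ) da ν(dθ) < ∞ for some ν-a.e. positive eigenfunction S of T for the eigenvalue 1, then there is a unique eigenfunction 𝔖_* ∈ L¹(ν) of T for the eigenvalue 1, positive ν-a.e., satisfying the normalization ∫_{ℝ₊×Θ} λ(a,θ) 𝔖_*(θ) da ν(dθ) = 1. -/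
open MeasureTheory Set Filter ENNReal
open scoped ENNReal

namespace Stmt6


section Real

variable {Θ : Type*} [MeasurableSpace Θ] {ν : Measure Θ} [IsProbabilityMeasure ν]
  {K : Θ → Θ → ℝ}

lemma nonempty_of_prob (ν : Measure Θ) [IsProbabilityMeasure ν] : Nonempty Θ := by
  by_contra h
  have h1 : ν univ = 1 := measure_univ
  rw [not_nonempty_iff] at h
  rw [univ_eq_empty_iff.2 h, measure_empty] at h1
  exact zero_ne_one h1

/-- `P B θ = ∫ θ', K θ' θ * B θ' ∂ν`. -/
noncomputable def P (ν : Measure Θ) (K : Θ → Θ → ℝ) (B : Θ → ℝ) : Θ → ℝ :=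
  fun θ => ∫ θ', K θ' θ * B θ' ∂ν

lemma Krow_integrable (hK_int : ∀ θ, ∫ θ', K θ θ' ∂ν = 1) (θ' : Θ) :
    Integrable (fun θ'' => K θ' θ'') ν := by
  by_contra h
  have h1 := hK_int θ'
  rw [integral_undef h] at h1
  exact one_ne_zero h1.symm

lemma Kcol_meas (hK_meas : Measurable fun p : Θ × Θ => K p.1 p.2) (θ : Θ) :
    Measurable fun θ' => K θ' θ :=
  hK_meas.comp (measurable_id.prodMk measurable_const)

lemma int_mul (hK_meas : Measurable fun p : Θ × Θ => K p.1 p.2)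
    (hK_pos : ∀ θ θ', 0 < K θ θ')
    (hK_bdd : ∀ θ, BddAbove (Set.range fun θ' => K θ' θ))
    {B : Θ → ℝ} (hB : Integrable B ν) (θ : Θ) :
    Integrable (fun θ' => K θ' θ * B θ') ν := by
  refine Integrable.mono' ((hB.norm).const_mul (⨆ t, K t θ))
    (((Kcol_meas hK_meas θ).aestronglyMeasurable).mul hB.1) ?_
  filter_upwards with θ'
  rw [norm_mul]
  have h1 : ‖K θ' θ‖ ≤ ⨆ t, K t θ := by
    rw [Real.norm_eq_abs, abs_of_pos (hK_pos θ' θ)]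
    exact le_ciSup (hK_bdd θ) θ'
  exact mul_le_mul_of_nonneg_right h1 (norm_nonneg _)

lemma P_congr {B B' : Θ → ℝ} (h : B =ᵐ[ν] B') : P ν K B = P ν K B' := by
  funext θ
  exact integral_congr_ae (h.mono fun θ' hθ' => by simp only [hθ'])

lemma prod_integrable (hK_meas : Measurable fun p : Θ × Θ => K p.1 p.2)
    (hK_pos : ∀ θ θ', 0 < K θ θ') (hK_int : ∀ θ, ∫ θ', K θ θ' ∂ν = 1)
    {B : Θ → ℝ} (hB : Integrable B ν) (hBm : Measurable B) :
    Integrable (fun p : Θ × Θ => K p.1 p.2 * B p.1) (ν.prod ν) := by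
  refine (integrable_prod_iff
    (hK_meas.mul (hBm.comp measurable_fst)).aestronglyMeasurable).2 ⟨?_, ?_⟩
  · filter_upwards with θ'
    show Integrable (fun θ => K θ' θ * B θ') ν
    have h1 : (fun θ => K θ' θ * B θ') = fun θ => B θ' * K θ' θ := by
      funext θ; ring
    rw [h1]
    exact (Krow_integrable hK_int θ').const_mul (B θ')
  · show Integrable (fun θ' => ∫ θ, ‖K θ' θ * B θ'‖ ∂ν) ν
    have h3 : (fun θ' => ∫ θ, ‖K θ' θ * B θ'‖ ∂ν) = fun θ' => ‖B θ'‖ := by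
      funext θ'
      have h2 : (fun θ => ‖K θ' θ * B θ'‖) = fun θ => K θ' θ * ‖B θ'‖ := by
        funext θ
        rw [norm_mul, Real.norm_eq_abs (K θ' θ), abs_of_pos (hK_pos θ' θ)]
      rw [h2, integral_mul_const, hK_int θ', one_mul]
    rw [h3]
    exact hB.norm

lemma P_integrable (hK_meas : Measurable fun p : Θ × Θ => K p.1 p.2)
    (hK_pos : ∀ θ θ', 0 < K θ θ') (hK_int : ∀ θ, ∫ θ', K θ θ' ∂ν = 1)
    {B : Θ → ℝ} (hB : Integrable B ν) : Integrable (P ν K B) ν := by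
  have hae : B =ᵐ[ν] hB.1.mk B := hB.1.ae_eq_mk
  rw [P_congr hae]
  exact ((prod_integrable hK_meas hK_pos hK_int (hB.congr hae)
    hB.1.measurable_mk).swap).integral_prod_left

lemma P_integral_eq (hK_meas : Measurable fun p : Θ × Θ => K p.1 p.2)
    (hK_pos : ∀ θ θ', 0 < K θ θ') (hK_int : ∀ θ, ∫ θ', K θ θ' ∂ν = 1)
    {B : Θ → ℝ} (hB : Integrable B ν) :
    ∫ θ, P ν K B θ ∂ν = ∫ θ, B θ ∂ν := by
  have hae : B =ᵐ[ν] hB.1.mk B := hB.1.ae_eq_mk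
  set B' := hB.1.mk B
  have hB' : Integrable B' ν := hB.congr hae
  have hB'm : Measurable B' := hB.1.measurable_mk
  rw [P_congr hae]
  have h := (prod_integrable hK_meas hK_pos hK_int hB' hB'm).swap
  have hs := integral_integral_swap (f := fun θ θ' => K θ' θ * B' θ') h
  calc ∫ θ, P ν K B' θ ∂ν = ∫ θ, ∫ θ', K θ' θ * B' θ' ∂ν ∂ν := rfl
    _ = ∫ θ', ∫ θ, K θ' θ * B' θ' ∂ν ∂ν := hs
    _ = ∫ θ', B' θ' ∂ν := by
        congr 1
        funext θ'
        rw [integral_mul_const, hK_int θ', one_mul]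
    _ = ∫ θ, B θ ∂ν := (integral_congr_ae hae).symm

lemma P_abs_le (hK_pos : ∀ θ θ', 0 < K θ θ') {B : Θ → ℝ} (θ : Θ) :
    |P ν K B θ| ≤ P ν K (fun t => |B t|) θ := by
  rw [← Real.norm_eq_abs]
  refine (norm_integral_le_integral_norm _).trans ?_
  refine le_of_eq (integral_congr_ae ?_)
  filter_upwards with θ'
  simp only [Real.norm_eq_abs, abs_mul, abs_of_pos (hK_pos θ' _)]

lemma P_pos (hK_meas : Measurable fun p : Θ × Θ => K p.1 p.2)
    (hK_pos : ∀ θ θ', 0 < K θ θ')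
    (hK_bdd : ∀ θ, BddAbove (Set.range fun θ' => K θ' θ))
    {B : Θ → ℝ} (hB : Integrable B ν) (h0 : 0 ≤ᵐ[ν] B) (hpos : 0 < ∫ θ, B θ ∂ν)
    (θ : Θ) : 0 < P ν K B θ := by
  have hint := int_mul hK_meas hK_pos hK_bdd hB θ
  have hnn : 0 ≤ᵐ[ν] fun θ' => K θ' θ * B θ' := by
    filter_upwards [h0] with θ' h
    exact mul_nonneg (hK_pos θ' θ).le h
  rw [P]
  rw [integral_pos_iff_support_of_nonneg_ae hnn hint]
  have hsub : Function.support B ⊆ Function.support fun θ' => K θ' θ * B θ' := by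
    intro θ' h
    simp only [Function.mem_support] at h ⊢
    exact mul_ne_zero (hK_pos θ' θ).ne' h
  refine lt_of_lt_of_le ?_ (measure_mono hsub)
  exact (integral_pos_iff_support_of_nonneg_ae h0 hB).1 hpos


lemma not_null_pos_integral {S : Θ → ℝ} (hS : Integrable S ν) (hnn : ∀ θ, 0 ≤ S θ)
    (hnz : ¬ S =ᵐ[ν] 0) : 0 < ∫ θ, S θ ∂ν := by
  rw [integral_pos_iff_support_of_nonneg_ae (ae_of_all _ hnn) hS]
  rw [pos_iff_ne_zero]
  intro hc
  refine hnz ?_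
  rw [Filter.EventuallyEq, ae_iff]
  simp only [Pi.zero_apply]
  have : {a | ¬ S a = 0} = Function.support S := by
    ext θ; simp [Function.mem_support]
  rw [this]
  exact hc

lemma invariant_integral_ne_zero (hK_meas : Measurable fun p : Θ × Θ => K p.1 p.2)
    (hK_pos : ∀ θ θ', 0 < K θ θ') (hK_int : ∀ θ, ∫ θ', K θ θ' ∂ν = 1)
    (hK_bdd : ∀ θ, BddAbove (Set.range fun θ' => K θ' θ))
    {S : Θ → ℝ} (hS : Integrable S ν) (hnz : ¬ S =ᵐ[ν] 0) (hinv : P ν K S =ᵐ[ν] S) :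
    ∫ θ, S θ ∂ν ≠ 0 := by
  set absS := fun θ => |S θ| with habsS
  have habs_int : Integrable absS ν := hS.abs
  have hPabs_int : Integrable (P ν K absS) ν := P_integrable hK_meas hK_pos hK_int habs_int
  have h1 : ∀ᵐ θ ∂ν, |S θ| ≤ P ν K absS θ := by
    filter_upwards [hinv] with θ h
    rw [← h]
    exact P_abs_le hK_pos θ
  have h2 : ∫ θ, (P ν K absS θ - absS θ) ∂ν = 0 := by
    rw [integral_sub hPabs_int habs_int, P_integral_eq hK_meas hK_pos hK_int habs_int, sub_self]
  have heq : (fun θ => P ν K absS θ - absS θ) =ᵐ[ν] 0 := by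
    refine (integral_eq_zero_iff_of_nonneg_ae ?_ (hPabs_int.sub habs_int)).1 h2
    filter_upwards [h1] with θ h
    simpa [absS] using h
  have habs_inv : P ν K absS =ᵐ[ν] absS := by
    filter_upwards [heq] with θ h
    simpa [sub_eq_zero] using h
  -- positive and negative parts
  set Spos := fun θ => (|S θ| + S θ) / 2 with hSpos
  set Sneg := fun θ => (|S θ| - S θ) / 2 with hSneg
  have hSpos_int : Integrable Spos ν := (habs_int.add hS).div_const 2
  have hSneg_int : Integrable Sneg ν := (habs_int.sub hS).div_const 2
  have hSpos_nn : ∀ θ, 0 ≤ Spos θ := fun θ => by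
    have := neg_abs_le (S θ); simp only [Spos]; linarith
  have hSneg_nn : ∀ θ, 0 ≤ Sneg θ := fun θ => by
    have := le_abs_self (S θ); simp only [Sneg]; linarith
  have hpos_inv : P ν K Spos =ᵐ[ν] Spos := by
    have hpt : ∀ θ, P ν K Spos θ = (P ν K absS θ + P ν K S θ) / 2 := by
      intro θ
      have hrw : (fun θ' => K θ' θ * Spos θ')
          = fun θ' => (K θ' θ * absS θ' + K θ' θ * S θ') / 2 := by
        funext θ'; simp only [Spos, absS]; ring
      show ∫ θ', K θ' θ * Spos θ' ∂ν = _
      rw [hrw]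
      rw [integral_div]
      rw [integral_add (int_mul hK_meas hK_pos hK_bdd habs_int θ)
        (int_mul hK_meas hK_pos hK_bdd hS θ)]
      rfl
    filter_upwards [habs_inv, hinv] with θ ha hb
    rw [hpt θ, ha, hb]
  have hneg_inv : P ν K Sneg =ᵐ[ν] Sneg := by
    have hpt : ∀ θ, P ν K Sneg θ = (P ν K absS θ - P ν K S θ) / 2 := by
      intro θ
      have hrw : (fun θ' => K θ' θ * Sneg θ')
          = fun θ' => (K θ' θ * absS θ' - K θ' θ * S θ') / 2 := by
        funext θ'; simp only [Sneg, absS]; ring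
      show ∫ θ', K θ' θ * Sneg θ' ∂ν = _
      rw [hrw, integral_div, integral_sub (int_mul hK_meas hK_pos hK_bdd habs_int θ)
        (int_mul hK_meas hK_pos hK_bdd hS θ)]
      rfl
    filter_upwards [habs_inv, hinv] with θ ha hb
    rw [hpt θ, ha, hb]
  have hdich : Spos =ᵐ[ν] 0 ∨ Sneg =ᵐ[ν] 0 := by
    by_contra hc
    push_neg at hc
    obtain ⟨hc1, hc2⟩ := hc
    have hip : 0 < ∫ θ, Spos θ ∂ν := not_null_pos_integral hSpos_int hSpos_nn hc1
    have hin : 0 < ∫ θ, Sneg θ ∂ν := not_null_pos_integral hSneg_int hSneg_nn hc2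
    have haep : ∀ᵐ θ ∂ν, 0 < Spos θ := by
      filter_upwards [hpos_inv] with θ h
      rw [← h]
      exact P_pos hK_meas hK_pos hK_bdd hSpos_int (ae_of_all _ hSpos_nn) hip θ
    have haen : ∀ᵐ θ ∂ν, 0 < Sneg θ := by
      filter_upwards [hneg_inv] with θ h
      rw [← h]
      exact P_pos hK_meas hK_pos hK_bdd hSneg_int (ae_of_all _ hSneg_nn) hin θ
    have hne : (ae ν).NeBot := ae_neBot.2 (IsProbabilityMeasure.ne_zero ν)
    obtain ⟨θ, hp, hn⟩ := (haep.and haen).exists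
    rcases abs_cases (S θ) with ⟨he, _⟩ | ⟨he, _⟩
    · simp only [Sneg, he] at hn; linarith
    · simp only [Spos, he] at hp; linarith
  rcases hdich with h | h
  · -- S =ᵐ -Sneg, integral < 0
    have hSe : S =ᵐ[ν] fun θ => -Sneg θ := by
      filter_upwards [h] with θ hθ
      simp only [Spos, Pi.zero_apply] at hθ
      simp only [Sneg]; linarith
    have hnzn : ¬ Sneg =ᵐ[ν] 0 := by
      intro hc
      refine hnz ?_
      filter_upwards [hSe, hc] with θ h1 h2
      simp only [Pi.zero_apply] at h2 ⊢
      rw [h1, h2, neg_zero]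
    have : 0 < ∫ θ, Sneg θ ∂ν := not_null_pos_integral hSneg_int hSneg_nn hnzn
    rw [integral_congr_ae hSe, integral_neg]
    intro hc
    rw [neg_eq_zero] at hc
    exact this.ne' hc
  · -- S =ᵐ Spos, integral > 0
    have hSe : S =ᵐ[ν] Spos := by
      filter_upwards [h] with θ hθ
      simp only [Sneg, Pi.zero_apply] at hθ
      simp only [Spos]; linarith
    have hnzp : ¬ Spos =ᵐ[ν] 0 := fun hc => hnz (hSe.trans hc)
    have : 0 < ∫ θ, Spos θ ∂ν := not_null_pos_integral hSpos_int hSpos_nn hnzp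
    rw [integral_congr_ae hSe]
    exact this.ne'

lemma eigen_proportional (hK_meas : Measurable fun p : Θ × Θ => K p.1 p.2)
    (hK_pos : ∀ θ θ', 0 < K θ θ') (hK_int : ∀ θ, ∫ θ', K θ θ' ∂ν = 1)
    (hK_bdd : ∀ θ, BddAbove (Set.range fun θ' => K θ' θ))
    {S₁ S₂ : Θ → ℝ} (h1 : Integrable S₁ ν) (h2 : Integrable S₂ ν)
    (hnz1 : ¬ S₁ =ᵐ[ν] 0) (hnz2 : ¬ S₂ =ᵐ[ν] 0)
    (hi1 : P ν K S₁ =ᵐ[ν] S₁) (hi2 : P ν K S₂ =ᵐ[ν] S₂) :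
    ∃ c : ℝ, S₁ =ᵐ[ν] fun θ => c * S₂ θ := by
  have hS2ne : ∫ θ, S₂ θ ∂ν ≠ 0 :=
    invariant_integral_ne_zero hK_meas hK_pos hK_int hK_bdd h2 hnz2 hi2
  set c := (∫ θ, S₁ θ ∂ν) / (∫ θ, S₂ θ ∂ν) with hc
  refine ⟨c, ?_⟩
  set D := fun θ => S₁ θ - c * S₂ θ with hD
  have hD_int : Integrable D ν := h1.sub (h2.const_mul c)
  have hD_inv : P ν K D =ᵐ[ν] D := by
    have hpt : ∀ θ, P ν K D θ = P ν K S₁ θ - c * P ν K S₂ θ := by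
      intro θ
      have hrw : (fun θ' => K θ' θ * D θ')
          = fun θ' => K θ' θ * S₁ θ' - c * (K θ' θ * S₂ θ') := by
        funext θ'; simp only [D]; ring
      show ∫ θ', K θ' θ * D θ' ∂ν = _
      rw [hrw, integral_sub (int_mul hK_meas hK_pos hK_bdd h1 θ)
        ((int_mul hK_meas hK_pos hK_bdd h2 θ).const_mul c), integral_const_mul]
      rfl
    filter_upwards [hi1, hi2] with θ ha hb
    rw [hpt θ, ha, hb]
  have hiD : ∫ θ, D θ ∂ν = 0 := by
    rw [integral_sub h1 (h2.const_mul c), integral_const_mul, hc,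
      div_mul_cancel₀ _ hS2ne, sub_self]
  have hD0 : D =ᵐ[ν] 0 := by
    by_contra hne
    exact invariant_integral_ne_zero hK_meas hK_pos hK_int hK_bdd hD_int hne hD_inv hiD
  filter_upwards [hD0] with θ h
  simp only [D, Pi.zero_apply, sub_eq_zero] at h
  exact h

end Real

section ENN

variable {Θ : Type*} [MeasurableSpace Θ] {ν : Measure Θ} [IsProbabilityMeasure ν]
  {K : Θ → Θ → ℝ}

/-- `ENNReal` version of the kernel. -/
noncomputable def Kq (K : Θ → Θ → ℝ) (θ θ' : Θ) : ℝ≥0∞ := ENNReal.ofReal (K θ θ')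

/-- Iterates of the dual operator applied to the constant density `1`. -/
noncomputable def bfun (ν : Measure Θ) (K : Θ → Θ → ℝ) : ℕ → Θ → ℝ≥0∞
  | 0 => fun _ => 1
  | n + 1 => fun θ => ∫⁻ θ', Kq K θ' θ * bfun ν K n θ' ∂ν

/-- Cesàro averages of the iterates, integrated against `f`. -/
noncomputable def cval (ν : Measure Θ) (K : Θ → Θ → ℝ) (n : ℕ) (f : Θ → ℝ≥0∞) : ℝ≥0∞ :=
  (∑ k ∈ Finset.range n, ∫⁻ θ, bfun ν K (k + 1) θ * f θ ∂ν) / n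

/-- A fixed ultrafilter extending `atTop` on `ℕ`. -/
noncomputable def UF : Ultrafilter ℕ := Ultrafilter.of atTop

lemma UF_le : (UF : Filter ℕ) ≤ atTop := Ultrafilter.of_le atTop

/-- Generalized (ultrafilter) limit of the Cesàro averages. -/
noncomputable def lamF (ν : Measure Θ) (K : Θ → Θ → ℝ) (f : Θ → ℝ≥0∞) : ℝ≥0∞ :=
  limUnder (UF : Filter ℕ) fun n => cval ν K n f

lemma tendsto_cval (f : Θ → ℝ≥0∞) :
    Tendsto (fun n => cval ν K n f) (UF : Filter ℕ) (nhds (lamF ν K f)) := by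
  obtain ⟨x, -, hx⟩ := isCompact_univ.ultrafilter_le_nhds
    (UF.map fun n => cval ν K n f) (by simp)
  rw [Ultrafilter.coe_map] at hx
  have hx' : Tendsto (fun n => cval ν K n f) (UF : Filter ℕ) (nhds x) := hx
  rwa [lamF, hx'.limUnder_eq]

lemma Kq_swap_meas (hK_meas : Measurable fun p : Θ × Θ => K p.1 p.2) :
    Measurable fun p : Θ × Θ => Kq K p.2 p.1 :=
  ((hK_meas.comp measurable_swap)).ennreal_ofReal

lemma Kq_col_meas (hK_meas : Measurable fun p : Θ × Θ => K p.1 p.2) (θ' : Θ) :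
    Measurable fun θ => Kq K θ' θ :=
  (hK_meas.comp (measurable_const.prodMk measurable_id)).ennreal_ofReal

lemma bfun_meas (hK_meas : Measurable fun p : Θ × Θ => K p.1 p.2) :
    ∀ n, Measurable (bfun ν K n) := by
  intro n
  induction n with
  | zero => exact measurable_const
  | succ n ih =>
    have h : Measurable fun p : Θ × Θ => Kq K p.2 p.1 * bfun ν K n p.2 :=
      (Kq_swap_meas hK_meas).mul (ih.comp measurable_snd)
    exact h.lintegral_prod_right'

lemma Kq_lint (hK_pos : ∀ θ θ', 0 < K θ θ') (hK_int : ∀ θ, ∫ θ', K θ θ' ∂ν = 1) (θ' : Θ) :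
    ∫⁻ θ'', Kq K θ' θ'' ∂ν = 1 := by
  have h := ofReal_integral_eq_lintegral_ofReal (Krow_integrable hK_int θ')
    (ae_of_all _ fun θ'' => (hK_pos θ' θ'').le)
  rw [hK_int θ'] at h
  simpa [Kq] using h.symm

lemma bfun_lint (hK_meas : Measurable fun p : Θ × Θ => K p.1 p.2)
    (hK_pos : ∀ θ θ', 0 < K θ θ') (hK_int : ∀ θ, ∫ θ', K θ θ' ∂ν = 1) :
    ∀ n, ∫⁻ θ, bfun ν K n θ ∂ν = 1 := by
  intro n
  induction n with
  | zero =>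
      show ∫⁻ _, (1:ℝ≥0∞) ∂ν = 1
      simp
  | succ n ih =>
    have hu : AEMeasurable (Function.uncurry fun θ θ' => Kq K θ' θ * bfun ν K n θ')
        (ν.prod ν) := by
      exact ((Kq_swap_meas hK_meas).mul ((bfun_meas hK_meas n).comp measurable_snd)).aemeasurable
    calc ∫⁻ θ, bfun ν K (n + 1) θ ∂ν
        = ∫⁻ θ, ∫⁻ θ', Kq K θ' θ * bfun ν K n θ' ∂ν ∂ν := rfl
      _ = ∫⁻ θ', ∫⁻ θ, Kq K θ' θ * bfun ν K n θ' ∂ν ∂ν := lintegral_lintegral_swap hu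
      _ = ∫⁻ θ', bfun ν K n θ' ∂ν := by
          refine lintegral_congr fun θ' => ?_
          rw [lintegral_mul_const _ (Kq_col_meas hK_meas θ'), Kq_lint hK_pos hK_int θ', one_mul]
      _ = 1 := ih

lemma bfun_le (hK_meas : Measurable fun p : Θ × Θ => K p.1 p.2)
    (hK_pos : ∀ θ θ', 0 < K θ θ') (hK_int : ∀ θ, ∫ θ', K θ θ' ∂ν = 1)
    (hK_bdd : ∀ θ, BddAbove (Set.range fun θ' => K θ' θ)) (n : ℕ) (θ : Θ) :
    bfun ν K (n + 1) θ ≤ ENNReal.ofReal (⨆ t, K t θ) := by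
  show ∫⁻ θ', Kq K θ' θ * bfun ν K n θ' ∂ν ≤ _
  calc ∫⁻ θ', Kq K θ' θ * bfun ν K n θ' ∂ν
      ≤ ∫⁻ θ', ENNReal.ofReal (⨆ t, K t θ) * bfun ν K n θ' ∂ν :=
        lintegral_mono fun θ' =>
          mul_le_mul_left (ENNReal.ofReal_le_ofReal (le_ciSup (hK_bdd θ) θ')) _
    _ = ENNReal.ofReal (⨆ t, K t θ) * ∫⁻ θ', bfun ν K n θ' ∂ν :=
        lintegral_const_mul _ (bfun_meas hK_meas n)
    _ = _ := by rw [bfun_lint hK_meas hK_pos hK_int n, mul_one]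

lemma cval_mono {f f' : Θ → ℝ≥0∞} (h : ∀ θ, f θ ≤ f' θ) (n : ℕ) :
    cval ν K n f ≤ cval ν K n f' :=
  ENNReal.div_le_div_right
    (Finset.sum_le_sum fun _ _ => lintegral_mono fun θ => mul_le_mul_right (h θ) _) _

lemma cval_add (hK_meas : Measurable fun p : Θ × Θ => K p.1 p.2)
    {f : Θ → ℝ≥0∞} (hf : Measurable f) (g : Θ → ℝ≥0∞) (n : ℕ) :
    cval ν K n (fun θ => f θ + g θ) = cval ν K n f + cval ν K n g := by
  rw [cval, cval, cval, ← ENNReal.add_div]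
  congr 1
  rw [← Finset.sum_add_distrib]
  refine Finset.sum_congr rfl fun k _ => ?_
  have : (fun θ => bfun ν K (k + 1) θ * (f θ + g θ))
      = fun θ => bfun ν K (k + 1) θ * f θ + bfun ν K (k + 1) θ * g θ := by
    funext θ; ring
  rw [this, lintegral_add_left (f := fun θ => bfun ν K (k + 1) θ * f θ) ((bfun_meas hK_meas (k + 1)).mul hf)]

lemma cval_smul (r : ℝ≥0∞) (hr : r ≠ ∞) (f : Θ → ℝ≥0∞) (n : ℕ) :
    cval ν K n (fun θ => r * f θ) = r * cval ν K n f := by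
  rw [cval, cval, div_eq_mul_inv, div_eq_mul_inv, ← mul_assoc]
  congr 1
  rw [Finset.mul_sum]
  refine Finset.sum_congr rfl fun k _ => ?_
  have : (fun θ => bfun ν K (k + 1) θ * (r * f θ))
      = fun θ => r * (bfun ν K (k + 1) θ * f θ) := by
    funext θ; ring
  rw [this, lintegral_const_mul' r _ hr]

lemma cval_le_of {f : Θ → ℝ≥0∞} {M : ℝ≥0∞}
    (h : ∀ k, ∫⁻ θ, bfun ν K (k + 1) θ * f θ ∂ν ≤ M) (n : ℕ) : cval ν K n f ≤ M := by
  refine ENNReal.div_le_of_le_mul ?_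
  calc ∑ k ∈ Finset.range n, ∫⁻ θ, bfun ν K (k + 1) θ * f θ ∂ν
      ≤ ∑ _k ∈ Finset.range n, M := Finset.sum_le_sum fun k _ => h k
    _ = n * M := by rw [Finset.sum_const, Finset.card_range, nsmul_eq_mul]
    _ = M * n := mul_comm _ _

end ENN

section Lam

variable {Θ : Type*} [MeasurableSpace Θ] {ν : Measure Θ} [IsProbabilityMeasure ν]
  {K : Θ → Θ → ℝ}

lemma lamF_eq {f : Θ → ℝ≥0∞} {x : ℝ≥0∞}
    (h : Tendsto (fun n => cval ν K n f) (UF : Filter ℕ) (nhds x)) : lamF ν K f = x :=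
  tendsto_nhds_unique (tendsto_cval f) h

lemma lamF_mono {f f' : Θ → ℝ≥0∞} (h : ∀ θ, f θ ≤ f' θ) : lamF ν K f ≤ lamF ν K f' :=
  le_of_tendsto_of_tendsto' (tendsto_cval f) (tendsto_cval f') (cval_mono h)

lemma lamF_zero : lamF ν K (fun _ => 0) = 0 := by
  have h : ∀ n, cval ν K n (fun _ => (0 : ℝ≥0∞)) = 0 := fun n => by simp [cval]
  exact lamF_eq (by simp only [h]; exact tendsto_const_nhds)

lemma lamF_one (hK_meas : Measurable fun p : Θ × Θ => K p.1 p.2)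
    (hK_pos : ∀ θ θ', 0 < K θ θ') (hK_int : ∀ θ, ∫ θ', K θ θ' ∂ν = 1) :
    lamF ν K (fun _ => 1) = 1 := by
  refine lamF_eq ?_
  have h : ∀ᶠ n in (UF : Filter ℕ), cval ν K n (fun _ => (1 : ℝ≥0∞)) = 1 := by
    filter_upwards [(eventually_ge_atTop 1).filter_mono UF_le] with n hn
    have h1 : ∀ k, ∫⁻ θ, bfun ν K (k + 1) θ ∂ν = 1 := fun k =>
      bfun_lint hK_meas hK_pos hK_int (k + 1)
    rw [cval]
    simp only [mul_one, h1, Finset.sum_const, Finset.card_range, nsmul_eq_mul, mul_one]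
    exact ENNReal.div_self (by exact_mod_cast Nat.one_le_iff_ne_zero.1 hn)
      (ENNReal.natCast_ne_top n)
  have hc : Tendsto (fun _ : ℕ => (1 : ℝ≥0∞)) (UF : Filter ℕ) (nhds 1) := tendsto_const_nhds
  exact hc.congr' (h.mono fun n hn => hn.symm)

lemma lamF_add (hK_meas : Measurable fun p : Θ × Θ => K p.1 p.2)
    {f : Θ → ℝ≥0∞} (hf : Measurable f) (g : Θ → ℝ≥0∞) :
    lamF ν K (fun θ => f θ + g θ) = lamF ν K f + lamF ν K g := by
  refine lamF_eq ?_
  simp only [cval_add hK_meas hf g]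
  exact (tendsto_cval f).add (tendsto_cval g)

lemma lamF_smul (r : ℝ≥0∞) (hr : r ≠ ∞) (f : Θ → ℝ≥0∞) :
    lamF ν K (fun θ => r * f θ) = r * lamF ν K f := by
  refine lamF_eq ?_
  simp only [cval_smul r hr f]
  exact ENNReal.Tendsto.const_mul (tendsto_cval f) (Or.inr hr)

lemma lamF_indicator_le (hK_meas : Measurable fun p : Θ × Θ => K p.1 p.2)
    (hK_pos : ∀ θ θ', 0 < K θ θ') (hK_int : ∀ θ, ∫ θ', K θ θ' ∂ν = 1)
    (hK_bdd : ∀ θ, BddAbove (Set.range fun θ' => K θ' θ))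
    {A : Set Θ} (hA : MeasurableSet A) :
    lamF ν K (A.indicator fun _ => 1) ≤ ∫⁻ θ in A, ENNReal.ofReal (⨆ t, K t θ) ∂ν := by
  refine le_of_tendsto' (tendsto_cval _) fun n => cval_le_of (fun k => ?_) n
  calc ∫⁻ θ, bfun ν K (k + 1) θ * A.indicator (fun _ => 1) θ ∂ν
      ≤ ∫⁻ θ, A.indicator (fun θ => ENNReal.ofReal (⨆ t, K t θ)) θ ∂ν := by
        refine lintegral_mono fun θ => ?_
        by_cases hθ : θ ∈ A
        · simp only [Set.indicator_of_mem hθ, mul_one]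
          exact bfun_le hK_meas hK_pos hK_int hK_bdd k θ
        · simp [Set.indicator_of_notMem hθ]
    _ = ∫⁻ θ in A, ENNReal.ofReal (⨆ t, K t θ) ∂ν := lintegral_indicator hA _

/-- Dual (Markov) operator acting on bounded functions. -/
noncomputable def Pq (ν : Measure Θ) (K : Θ → Θ → ℝ) (f : Θ → ℝ≥0∞) : Θ → ℝ≥0∞ :=
  fun θ' => ∫⁻ θ, Kq K θ' θ * f θ ∂ν

lemma Kq_fst_meas (hK_meas : Measurable fun p : Θ × Θ => K p.1 p.2) (θ : Θ) :
    Measurable fun θ' => Kq K θ' θ :=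
  (hK_meas.comp (measurable_id.prodMk measurable_const)).ennreal_ofReal

lemma Pq_meas (hK_meas : Measurable fun p : Θ × Θ => K p.1 p.2)
    {f : Θ → ℝ≥0∞} (hf : Measurable f) : Measurable (Pq ν K f) := by
  have h : Measurable fun p : Θ × Θ => Kq K p.1 p.2 * f p.2 :=
    (hK_meas.ennreal_ofReal).mul (hf.comp measurable_snd)
  exact h.lintegral_prod_right'

lemma Pq_le_one (hK_pos : ∀ θ θ', 0 < K θ θ') (hK_int : ∀ θ, ∫ θ', K θ θ' ∂ν = 1)
    {f : Θ → ℝ≥0∞} (hf1 : ∀ θ, f θ ≤ 1) (θ' : Θ) : Pq ν K f θ' ≤ 1 := by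
  calc Pq ν K f θ' ≤ ∫⁻ θ, Kq K θ' θ * 1 ∂ν :=
        lintegral_mono fun θ => mul_le_mul_right (hf1 θ) _
    _ = 1 := by simp_rw [mul_one]; exact Kq_lint hK_pos hK_int θ'

lemma shift_step (hK_meas : Measurable fun p : Θ × Θ => K p.1 p.2)
    {f : Θ → ℝ≥0∞} (hf : Measurable f) (k : ℕ) :
    ∫⁻ θ', bfun ν K k θ' * Pq ν K f θ' ∂ν = ∫⁻ θ, bfun ν K (k + 1) θ * f θ ∂ν := by
  have h1 : ∀ θ', bfun ν K k θ' * Pq ν K f θ' = ∫⁻ θ, bfun ν K k θ' * (Kq K θ' θ * f θ) ∂ν :=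
    fun θ' => (lintegral_const_mul _ ((Kq_col_meas hK_meas θ').mul hf)).symm
  have hu : AEMeasurable
      (Function.uncurry fun θ' θ => bfun ν K k θ' * (Kq K θ' θ * f θ)) (ν.prod ν) :=
    (((bfun_meas hK_meas k).comp measurable_fst).mul
      ((hK_meas.ennreal_ofReal).mul (hf.comp measurable_snd))).aemeasurable
  calc ∫⁻ θ', bfun ν K k θ' * Pq ν K f θ' ∂ν
      = ∫⁻ θ', ∫⁻ θ, bfun ν K k θ' * (Kq K θ' θ * f θ) ∂ν ∂ν := lintegral_congr h1
    _ = ∫⁻ θ, ∫⁻ θ', bfun ν K k θ' * (Kq K θ' θ * f θ) ∂ν ∂ν := lintegral_lintegral_swap hu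
    _ = ∫⁻ θ, bfun ν K (k + 1) θ * f θ ∂ν := by
        refine lintegral_congr fun θ => ?_
        have h2 : (fun θ' => bfun ν K k θ' * (Kq K θ' θ * f θ))
            = fun θ' => (Kq K θ' θ * bfun ν K k θ') * f θ := by
          funext θ'; ring
        rw [h2, lintegral_mul_const _ (f := fun θ' => Kq K θ' θ * bfun ν K k θ') ((Kq_fst_meas hK_meas θ).mul (bfun_meas hK_meas k))]
        rfl

lemma lamF_shift (hK_meas : Measurable fun p : Θ × Θ => K p.1 p.2)
    (hK_pos : ∀ θ θ', 0 < K θ θ') (hK_int : ∀ θ, ∫ θ', K θ θ' ∂ν = 1)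
    {f : Θ → ℝ≥0∞} (hf : Measurable f) (hf1 : ∀ θ, f θ ≤ 1) :
    lamF ν K (Pq ν K f) = lamF ν K f := by
  set x : ℕ → ℝ≥0∞ := fun j => ∫⁻ θ, bfun ν K (j + 1) θ * f θ ∂ν with hx
  have hxle : ∀ j, x j ≤ 1 := by
    intro j
    calc x j ≤ ∫⁻ θ, bfun ν K (j + 1) θ * 1 ∂ν :=
          lintegral_mono fun θ => mul_le_mul_right (hf1 θ) _
      _ = 1 := by simp_rw [mul_one]; exact bfun_lint hK_meas hK_pos hK_int (j + 1)
  have hcP : ∀ n, cval ν K n (Pq ν K f) = (∑ k ∈ Finset.range n, x (k + 1)) / n := by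
    intro n
    rw [cval]
    congr 1
    exact Finset.sum_congr rfl fun k _ => shift_step hK_meas hf (k + 1)
  have hcf : ∀ n, cval ν K n f = (∑ k ∈ Finset.range n, x k) / n := fun n => rfl
  have hkey : ∀ n, (∑ k ∈ Finset.range n, x (k + 1)) + x 0
      = (∑ k ∈ Finset.range n, x k) + x n := by
    intro n
    rw [← Finset.sum_range_succ' x n, ← Finset.sum_range_succ x n]
  have h1 : ∀ n : ℕ, cval ν K n (Pq ν K f) ≤ cval ν K n f + 1 / (n : ℝ≥0∞) := by
    intro n
    rw [hcP n, hcf n]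
    have hle : (∑ k ∈ Finset.range n, x (k + 1)) ≤ (∑ k ∈ Finset.range n, x k) + x n :=
      calc (∑ k ∈ Finset.range n, x (k + 1))
          ≤ (∑ k ∈ Finset.range n, x (k + 1)) + x 0 := le_self_add
        _ = (∑ k ∈ Finset.range n, x k) + x n := hkey n
    calc (∑ k ∈ Finset.range n, x (k + 1)) / (n : ℝ≥0∞)
        ≤ ((∑ k ∈ Finset.range n, x k) + x n) / n := ENNReal.div_le_div_right hle n
      _ = (∑ k ∈ Finset.range n, x k) / n + x n / n := ENNReal.add_div
      _ ≤ (∑ k ∈ Finset.range n, x k) / n + 1 / n :=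
          add_le_add_right (ENNReal.div_le_div_right (hxle n) _) _
  have h2 : ∀ n : ℕ, cval ν K n f ≤ cval ν K n (Pq ν K f) + 1 / (n : ℝ≥0∞) := by
    intro n
    rw [hcP n, hcf n]
    have hle : (∑ k ∈ Finset.range n, x k) ≤ (∑ k ∈ Finset.range n, x (k + 1)) + x 0 :=
      calc (∑ k ∈ Finset.range n, x k)
          ≤ (∑ k ∈ Finset.range n, x k) + x n := le_self_add
        _ = (∑ k ∈ Finset.range n, x (k + 1)) + x 0 := (hkey n).symm
    calc (∑ k ∈ Finset.range n, x k) / (n : ℝ≥0∞)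
        ≤ ((∑ k ∈ Finset.range n, x (k + 1)) + x 0) / n := ENNReal.div_le_div_right hle n
      _ = (∑ k ∈ Finset.range n, x (k + 1)) / n + x 0 / n := ENNReal.add_div
      _ ≤ (∑ k ∈ Finset.range n, x (k + 1)) / n + 1 / n :=
          add_le_add_right (ENNReal.div_le_div_right (hxle 0) _) _
  have hinv : Tendsto (fun n : ℕ => 1 / (n : ℝ≥0∞)) (UF : Filter ℕ) (nhds 0) := by
    simp_rw [one_div]
    exact ENNReal.tendsto_inv_nat_nhds_zero.mono_left UF_le
  refine le_antisymm ?_ ?_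
  · have ht : Tendsto (fun n => cval ν K n f + 1 / (n : ℝ≥0∞)) (UF : Filter ℕ)
        (nhds (lamF ν K f + 0)) := (tendsto_cval f).add hinv
    rw [add_zero] at ht
    exact le_of_tendsto_of_tendsto' (tendsto_cval _) ht h1
  · have ht : Tendsto (fun n => cval ν K n (Pq ν K f) + 1 / (n : ℝ≥0∞)) (UF : Filter ℕ)
        (nhds (lamF ν K (Pq ν K f) + 0)) := (tendsto_cval _).add hinv
    rw [add_zero] at ht
    exact le_of_tendsto_of_tendsto' (tendsto_cval _) ht h2

end Lam

section Rho

variable {Θ : Type*} [MeasurableSpace Θ] {ν : Measure Θ} [IsProbabilityMeasure ν]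
  {K : Θ → Θ → ℝ}

lemma g_lint_ne_top (hK_sup_int : Integrable (fun θ => ⨆ θ', K θ' θ) ν) :
    ∫⁻ θ, ENNReal.ofReal (⨆ t, K t θ) ∂ν ≠ ∞ := by
  refine ne_of_lt (lt_of_le_of_lt ?_ hK_sup_int.2)
  refine lintegral_mono fun θ => ?_
  exact Real.ofReal_le_enorm _

lemma exists_rho (hK_meas : Measurable fun p : Θ × Θ => K p.1 p.2)
    (hK_pos : ∀ θ θ', 0 < K θ θ') (hK_int : ∀ θ, ∫ θ', K θ θ' ∂ν = 1)
    (hK_bdd : ∀ θ, BddAbove (Set.range fun θ' => K θ' θ))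
    (hK_sup_int : Integrable (fun θ => ⨆ θ', K θ' θ) ν) :
    ∃ ρ : Measure Θ, ρ univ = 1 ∧ ρ ≪ ν ∧
      ∀ A : Set Θ, MeasurableSet A → ρ A = lamF ν K (A.indicator fun _ => 1) := by
  set g : Θ → ℝ≥0∞ := fun θ => ENNReal.ofReal (⨆ t, K t θ) with hg
  -- finite additivity (two sets)
  have hfin : ∀ (A B : Set Θ), MeasurableSet A → Disjoint A B →
      lamF ν K ((A ∪ B).indicator fun _ => 1)
        = lamF ν K (A.indicator fun _ => 1) + lamF ν K (B.indicator fun _ => 1) := by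
    intro A B hA hAB
    rw [Set.indicator_union_of_disjoint hAB]
    exact lamF_add hK_meas (measurable_one.indicator hA) _
  -- finite additivity over finsets
  have hfinS : ∀ (A : ℕ → Set Θ), (∀ i, MeasurableSet (A i)) → Pairwise (Function.onFun Disjoint A) →
      ∀ s : Finset ℕ, lamF ν K ((⋃ i ∈ s, A i).indicator fun _ => 1)
        = ∑ i ∈ s, lamF ν K ((A i).indicator fun _ => 1) := by
    intro A hmA hd s
    induction s using Finset.induction_on with
    | empty => simp only [Finset.notMem_empty, iUnion_of_empty, iUnion_empty,
        Set.indicator_empty, Finset.sum_empty]; exact lamF_zero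
    | @insert a s ha ih =>
      rw [Finset.set_biUnion_insert, Finset.sum_insert ha, ← ih]
      have hdis : Disjoint (A a) (⋃ i ∈ s, A i) := by
        refine Set.disjoint_iUnion₂_right.2 fun i hi => hd ?_
        exact fun hai => ha (hai ▸ hi)
      rw [hfin (A a) _ (hmA a) hdis]
  have hsigma : ∀ (A : ℕ → Set Θ), (∀ i, MeasurableSet (A i)) → Pairwise (Function.onFun Disjoint A) →
      lamF ν K ((⋃ i, A i).indicator fun _ => 1)
        = ∑' i, lamF ν K ((A i).indicator fun _ => 1) := by
    intro A hmA hd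
    refine le_antisymm ?_ ?_
    · -- upper bound via tails
      set E : ℕ → ℝ≥0∞ := fun i => ∫⁻ θ in A i, g θ ∂ν with hE
      have hEsum : ∑' i, E i ≠ ∞ := by
        rw [← lintegral_iUnion hmA hd g]
        exact ne_of_lt (lt_of_le_of_lt (setLIntegral_le_lintegral _ _)
          (lt_of_le_of_ne le_top (g_lint_ne_top hK_sup_int)))
      have htail : Tendsto (fun N => ∑' j, E (j + N)) atTop (nhds 0) :=
        ENNReal.tendsto_sum_nat_add E hEsum
      have hbound : ∀ N : ℕ, lamF ν K ((⋃ i, A i).indicator fun _ => 1)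
          ≤ (∑ i ∈ Finset.range N, lamF ν K ((A i).indicator fun _ => 1))
            + ∑' j, E (j + N) := by
        intro N
        have hdec : (⋃ i, A i) = (⋃ i ∈ Finset.range N, A i) ∪ ⋃ j, A (j + N) := by
          ext θ
          simp only [mem_iUnion, mem_union, Finset.mem_range, exists_prop]
          constructor
          · rintro ⟨i, hi⟩
            rcases lt_or_ge i N with h | h
            · exact Or.inl ⟨i, h, hi⟩
            · exact Or.inr ⟨i - N, by rwa [Nat.sub_add_cancel h]⟩
          · rintro (⟨i, _, hi⟩ | ⟨j, hj⟩)
            · exact ⟨i, hi⟩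
            · exact ⟨j + N, hj⟩
        have hdisj2 : Disjoint (⋃ i ∈ Finset.range N, A i) (⋃ j, A (j + N)) := by
          refine Set.disjoint_iUnion₂_left.2 fun i hi => Set.disjoint_iUnion_right.2 fun j => ?_
          exact hd (by have := Finset.mem_range.1 hi; omega)
        have hmeasN : MeasurableSet (⋃ i ∈ Finset.range N, A i) :=
          MeasurableSet.biUnion (Finset.countable_toSet _) fun i _ => hmA i
        rw [hdec, hfin _ _ hmeasN hdisj2, hfinS A hmA hd (Finset.range N)]
        refine add_le_add_right ?_ _
        have htailmeas : ∀ j, MeasurableSet (A (j + N)) := fun j => hmA (j + N)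
        have htaild : Pairwise (Function.onFun Disjoint fun j => A (j + N)) := fun j j' hne =>
          hd (by omega)
        calc lamF ν K ((⋃ j, A (j + N)).indicator fun _ => 1)
            ≤ ∫⁻ θ in ⋃ j, A (j + N), g θ ∂ν :=
              lamF_indicator_le hK_meas hK_pos hK_int hK_bdd (MeasurableSet.iUnion htailmeas)
          _ = ∑' j, E (j + N) := lintegral_iUnion htailmeas htaild g
      have hRHS : Tendsto (fun N => (∑ i ∈ Finset.range N, lamF ν K
          ((A i).indicator fun _ => 1)) + ∑' j, E (j + N)) atTop
          (nhds ((∑' i, lamF ν K ((A i).indicator fun _ => 1)) + 0)) :=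
        (ENNReal.tendsto_nat_tsum _).add htail
      rw [add_zero] at hRHS
      exact ge_of_tendsto' hRHS hbound
    · -- lower bound
      rw [ENNReal.tsum_eq_iSup_sum]
      refine iSup_le fun s => ?_
      rw [← hfinS A hmA hd s]
      refine lamF_mono fun θ => ?_
      refine Set.indicator_le_indicator_of_subset ?_ (fun _ => zero_le) θ
      exact iUnion₂_subset fun i _ => subset_iUnion A i
  refine ⟨Measure.ofMeasurable (fun A _ => lamF ν K (A.indicator fun _ => 1)) ?_ ?_, ?_, ?_, ?_⟩
  · show lamF ν K ((∅ : Set Θ).indicator fun _ => 1) = 0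
    rw [Set.indicator_empty]; exact lamF_zero
  · intro A hmA hd
    exact hsigma A hmA hd
  · rw [Measure.ofMeasurable_apply _ MeasurableSet.univ, Set.indicator_univ]
    exact lamF_one hK_meas hK_pos hK_int
  · refine Measure.AbsolutelyContinuous.mk fun A hA h0 => ?_
    rw [Measure.ofMeasurable_apply _ hA]
    refine le_antisymm ?_ (zero_le)
    refine le_trans (lamF_indicator_le hK_meas hK_pos hK_int hK_bdd hA) ?_
    rw [setLIntegral_measure_zero _ _ h0]
  · intro A hA
    exact Measure.ofMeasurable_apply _ hA

end Rho

section Bridge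

variable {Θ : Type*} [MeasurableSpace Θ] {ν : Measure Θ} [IsProbabilityMeasure ν]
  {K : Θ → Θ → ℝ}

lemma lamF_finsum (hK_meas : Measurable fun p : Θ × Θ => K p.1 p.2)
    (s : Finset ℕ) (F : ℕ → Θ → ℝ≥0∞) (hF : ∀ j, Measurable (F j)) :
    lamF ν K (fun θ => ∑ j ∈ s, F j θ) = ∑ j ∈ s, lamF ν K (F j) := by
  induction s using Finset.induction_on with
  | empty => simp only [Finset.sum_empty]; exact lamF_zero
  | @insert a s ha ih =>
    simp only [Finset.sum_insert ha]
    rw [lamF_add hK_meas (hF a) _, ih]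

lemma lamF_const (hK_meas : Measurable fun p : Θ × Θ => K p.1 p.2)
    (hK_pos : ∀ θ θ', 0 < K θ θ') (hK_int : ∀ θ, ∫ θ', K θ θ' ∂ν = 1)
    (c : ℝ≥0∞) (hc : c ≠ ∞) : lamF ν K (fun _ => c) = c := by
  have h1 : (fun _ : Θ => c) = fun θ => c * (fun _ : Θ => (1 : ℝ≥0∞)) θ := by
    funext θ; rw [mul_one]
  rw [h1, lamF_smul c hc, lamF_one hK_meas hK_pos hK_int, mul_one]

lemma tendsto_ofReal_pow : Tendsto (fun m : ℕ => ENNReal.ofReal (1 / 2 ^ m)) atTop (nhds 0) := by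
  have h1 : ∀ m : ℕ, ENNReal.ofReal ((1 : ℝ) / 2 ^ m) = (2⁻¹ : ℝ≥0∞) ^ m := by
    intro m
    rw [one_div, ← inv_pow, ENNReal.ofReal_pow (by norm_num),
      ENNReal.ofReal_inv_of_pos (by norm_num)]
    norm_num
  simp only [h1]
  exact ENNReal.tendsto_pow_atTop_nhds_zero_of_lt_one (ENNReal.inv_lt_one.2 one_lt_two)

lemma bridge (hK_meas : Measurable fun p : Θ × Θ => K p.1 p.2)
    (hK_pos : ∀ θ θ', 0 < K θ θ') (hK_int : ∀ θ, ∫ θ', K θ θ' ∂ν = 1)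
    {ρ : Measure Θ} (hρ1 : ρ univ = 1)
    (hρap : ∀ A : Set Θ, MeasurableSet A → ρ A = lamF ν K (A.indicator fun _ => 1))
    {f : Θ → ℝ≥0∞} (hf : Measurable f) (hf1 : ∀ θ, f θ ≤ 1) :
    lamF ν K f = ∫⁻ θ, f θ ∂ρ := by
  have hfne : ∀ θ, f θ ≠ ∞ := fun θ => ne_of_lt (lt_of_le_of_lt (hf1 θ) ENNReal.one_lt_top)
  have hft : ∀ θ, f θ = ENNReal.ofReal ((f θ).toReal) := fun θ =>
    (ENNReal.ofReal_toReal (hfne θ)).symm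
  have hx0 : ∀ θ, 0 ≤ (f θ).toReal := fun θ => ENNReal.toReal_nonneg
  have hx1 : ∀ θ, (f θ).toReal ≤ 1 := fun θ => by
    rw [← ENNReal.toReal_one]
    exact ENNReal.toReal_mono one_ne_top (hf1 θ)
  have hmain : ∀ m : ℕ,
      lamF ν K f ≤ (∫⁻ θ, f θ ∂ρ) + ENNReal.ofReal (1 / 2 ^ m) ∧
      (∫⁻ θ, f θ ∂ρ) ≤ lamF ν K f + ENNReal.ofReal (1 / 2 ^ m) := by
    intro m
    have hq : (0 : ℝ) < 2 ^ m := by positivity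
    set D : Θ → ℝ≥0∞ := fun θ =>
      ENNReal.ofReal ((⌊(f θ).toReal * 2 ^ m⌋₊ : ℝ) / 2 ^ m) with hD
    set E : ℕ → Set Θ := fun j => {θ | ⌊(f θ).toReal * 2 ^ m⌋₊ = j} with hE
    have hEmeas : ∀ j, MeasurableSet (E j) := by
      intro j
      have hm : Measurable fun θ => ⌊(f θ).toReal * 2 ^ m⌋₊ :=
        ((hf.ennreal_toReal).mul_const _).nat_floor
      exact hm (measurableSet_singleton j)
    have hj_le : ∀ θ, ⌊(f θ).toReal * 2 ^ m⌋₊ ≤ 2 ^ m := by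
      intro θ
      have h1 : (f θ).toReal * 2 ^ m ≤ ((2 ^ m : ℕ) : ℝ) := by
        push_cast
        calc (f θ).toReal * 2 ^ m ≤ 1 * 2 ^ m :=
              mul_le_mul_of_nonneg_right (hx1 θ) hq.le
          _ = 2 ^ m := one_mul _
      exact le_trans (Nat.floor_le_floor h1) (le_of_eq (Nat.floor_natCast _))
    have hD_le : ∀ θ, D θ ≤ f θ := by
      intro θ
      rw [hft θ]
      refine ENNReal.ofReal_le_ofReal ?_
      rw [div_le_iff₀ hq]
      exact Nat.floor_le (by positivity)
    have hf_le : ∀ θ, f θ ≤ D θ + ENNReal.ofReal (1 / 2 ^ m) := by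
      intro θ
      conv_lhs => rw [hft θ]
      rw [← ENNReal.ofReal_add (by positivity) (by positivity)]
      refine ENNReal.ofReal_le_ofReal ?_
      rw [← add_div, le_div_iff₀ hq]
      exact le_of_lt (Nat.lt_floor_add_one _)
    have hDsum : D = fun θ => ∑ j ∈ Finset.range (2 ^ m + 1),
        (E j).indicator (fun _ => ENNReal.ofReal ((j : ℝ) / 2 ^ m)) θ := by
      funext θ
      have hmem : ⌊(f θ).toReal * 2 ^ m⌋₊ ∈ Finset.range (2 ^ m + 1) :=
        Finset.mem_range.2 (Nat.lt_succ_of_le (hj_le θ))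
      rw [Finset.sum_eq_single_of_mem _ hmem]
      · rw [Set.indicator_of_mem (by exact rfl)]
      · intro j _ hne
        refine Set.indicator_of_notMem ?_ _
        intro hmemE
        exact hne (by exact hmemE.symm)
    have hD_meas : Measurable D := by
      rw [hDsum]
      exact Finset.measurable_sum _ fun j _ => measurable_const.indicator (hEmeas j)
    have hterm : ∀ j, lamF ν K ((E j).indicator fun _ => ENNReal.ofReal ((j : ℝ) / 2 ^ m))
        = ENNReal.ofReal ((j : ℝ) / 2 ^ m) * ρ (E j) := by
      intro j
      have h1 : (E j).indicator (fun _ => ENNReal.ofReal ((j : ℝ) / 2 ^ m))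
          = fun θ => ENNReal.ofReal ((j : ℝ) / 2 ^ m)
              * (E j).indicator (fun _ => (1 : ℝ≥0∞)) θ := by
        funext θ
        by_cases hθ : θ ∈ E j <;> simp [hθ]
      rw [h1, lamF_smul _ ENNReal.ofReal_ne_top, hρap _ (hEmeas j)]
    have hLD : lamF ν K D
        = ∑ j ∈ Finset.range (2 ^ m + 1), ENNReal.ofReal ((j : ℝ) / 2 ^ m) * ρ (E j) := by
      rw [hDsum, lamF_finsum hK_meas _ _ fun j => measurable_const.indicator (hEmeas j)]
      exact Finset.sum_congr rfl fun j _ => hterm j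
    have hρD : ∫⁻ θ, D θ ∂ρ
        = ∑ j ∈ Finset.range (2 ^ m + 1), ENNReal.ofReal ((j : ℝ) / 2 ^ m) * ρ (E j) := by
      rw [hDsum, lintegral_finset_sum _ fun j _ => measurable_const.indicator (hEmeas j)]
      exact Finset.sum_congr rfl fun j _ => lintegral_indicator_const (hEmeas j) _
    have hLDeq : lamF ν K D = ∫⁻ θ, D θ ∂ρ := by rw [hLD, hρD]
    constructor
    · calc lamF ν K f ≤ lamF ν K (fun θ => D θ + ENNReal.ofReal (1 / 2 ^ m)) :=
            lamF_mono hf_le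
        _ = lamF ν K D + lamF ν K (fun _ => ENNReal.ofReal (1 / 2 ^ m)) :=
            lamF_add hK_meas hD_meas _
        _ = lamF ν K D + ENNReal.ofReal (1 / 2 ^ m) := by
            rw [lamF_const hK_meas hK_pos hK_int _ ENNReal.ofReal_ne_top]
        _ = (∫⁻ θ, D θ ∂ρ) + ENNReal.ofReal (1 / 2 ^ m) := by rw [hLDeq]
        _ ≤ (∫⁻ θ, f θ ∂ρ) + ENNReal.ofReal (1 / 2 ^ m) :=
            add_le_add_left (lintegral_mono hD_le) _
    · calc (∫⁻ θ, f θ ∂ρ) ≤ ∫⁻ θ, (D θ + ENNReal.ofReal (1 / 2 ^ m)) ∂ρ :=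
            lintegral_mono hf_le
        _ = (∫⁻ θ, D θ ∂ρ) + ENNReal.ofReal (1 / 2 ^ m) * ρ univ := by
            rw [lintegral_add_left hD_meas, lintegral_const]
        _ = (∫⁻ θ, D θ ∂ρ) + ENNReal.ofReal (1 / 2 ^ m) := by rw [hρ1, mul_one]
        _ = lamF ν K D + ENNReal.ofReal (1 / 2 ^ m) := by rw [hLDeq]
        _ ≤ lamF ν K f + ENNReal.ofReal (1 / 2 ^ m) :=
            add_le_add_left (lamF_mono hD_le) _
  refine le_antisymm ?_ ?_
  · have ht : Tendsto (fun m : ℕ => (∫⁻ θ, f θ ∂ρ) + ENNReal.ofReal (1 / 2 ^ m)) atTop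
        (nhds ((∫⁻ θ, f θ ∂ρ) + 0)) := tendsto_const_nhds.add tendsto_ofReal_pow
    rw [add_zero] at ht
    exact ge_of_tendsto' ht fun m => (hmain m).1
  · have ht : Tendsto (fun m : ℕ => lamF ν K f + ENNReal.ofReal (1 / 2 ^ m)) atTop
        (nhds (lamF ν K f + 0)) := tendsto_const_nhds.add tendsto_ofReal_pow
    rw [add_zero] at ht
    exact ge_of_tendsto' ht fun m => (hmain m).2

end Bridge

section Exist

variable {Θ : Type*} [MeasurableSpace Θ] {ν : Measure Θ} [IsProbabilityMeasure ν]
  {K : Θ → Θ → ℝ}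

lemma exists_positive_eigenfunction (hK_meas : Measurable fun p : Θ × Θ => K p.1 p.2)
    (hK_pos : ∀ θ θ', 0 < K θ θ') (hK_int : ∀ θ, ∫ θ', K θ θ' ∂ν = 1)
    (hK_bdd : ∀ θ, BddAbove (Set.range fun θ' => K θ' θ))
    (hK_sup_int : Integrable (fun θ => ⨆ θ', K θ' θ) ν) :
    ∃ S : Θ → ℝ, Integrable S ν ∧ (∀ᵐ θ ∂ν, 0 < S θ) ∧
      (fun θ => ∫ θ', K θ' θ * S θ' ∂ν) =ᵐ[ν] S := by
  obtain ⟨ρ, hρ1, hρν, hρap⟩ := exists_rho hK_meas hK_pos hK_int hK_bdd hK_sup_int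
  haveI : IsFiniteMeasure ρ := ⟨by rw [hρ1]; exact ENNReal.one_lt_top⟩
  set S' := ρ.rnDeriv ν with hS'
  have hwd : ν.withDensity S' = ρ := Measure.withDensity_rnDeriv_eq ρ ν hρν
  have hS'm : Measurable S' := Measure.measurable_rnDeriv ρ ν
  have hS'set : ∀ A : Set Θ, MeasurableSet A → ∫⁻ θ in A, S' θ ∂ν = ρ A := by
    intro A hA
    rw [← hwd]
    exact (withDensity_apply _ hA).symm
  have hS'tot : ∫⁻ θ, S' θ ∂ν = 1 := by
    have h := hS'set univ MeasurableSet.univ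
    rwa [Measure.restrict_univ, hρ1] at h
  have hS'fin : ∀ᵐ θ ∂ν, S' θ < ∞ := Measure.rnDeriv_lt_top ρ ν
  set Pd : Θ → ℝ≥0∞ := fun θ => ∫⁻ θ', Kq K θ' θ * S' θ' ∂ν with hPd
  have hPdm : Measurable Pd :=
    ((Kq_swap_meas hK_meas).mul (hS'm.comp measurable_snd)).lintegral_prod_right'
  have hPdset : ∀ A : Set Θ, MeasurableSet A → ∫⁻ θ in A, Pd θ ∂ν = ρ A := by
    intro A hA
    set hA1 : Θ → ℝ≥0∞ := fun θ' => ∫⁻ θ in A, Kq K θ' θ ∂ν with hhA1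
    have hswap : ∫⁻ θ in A, Pd θ ∂ν = ∫⁻ θ', S' θ' * hA1 θ' ∂ν := by
      have hu : AEMeasurable (Function.uncurry fun θ θ' => Kq K θ' θ * S' θ')
          ((ν.restrict A).prod ν) :=
        ((Kq_swap_meas hK_meas).mul (hS'm.comp measurable_snd)).aemeasurable
      calc ∫⁻ θ in A, Pd θ ∂ν
          = ∫⁻ θ', ∫⁻ θ in A, Kq K θ' θ * S' θ' ∂ν ∂ν := lintegral_lintegral_swap hu
        _ = ∫⁻ θ', S' θ' * hA1 θ' ∂ν := by
            refine lintegral_congr fun θ' => ?_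
            rw [lintegral_mul_const _ (Kq_col_meas hK_meas θ'), mul_comm]
    have hA1m : Measurable hA1 :=
      (hK_meas.ennreal_ofReal).lintegral_prod_right'
    have hA1le : ∀ θ', hA1 θ' ≤ 1 := fun θ' =>
      le_trans (setLIntegral_le_lintegral _ _) (le_of_eq (Kq_lint hK_pos hK_int θ'))
    have hA1P : hA1 = Pq ν K (A.indicator fun _ => 1) := by
      funext θ'
      show hA1 θ' = ∫⁻ θ, Kq K θ' θ * A.indicator (fun _ => 1) θ ∂ν
      have h2 : (fun θ => Kq K θ' θ * A.indicator (fun _ => 1) θ)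
          = A.indicator (fun θ => Kq K θ' θ) := by
        funext θ
        by_cases hθ : θ ∈ A <;> simp [hθ]
      rw [h2, lintegral_indicator hA]
    calc ∫⁻ θ in A, Pd θ ∂ν = ∫⁻ θ', hA1 θ' ∂ρ := by
          rw [hswap, ← hwd, lintegral_withDensity_eq_lintegral_mul ν hS'm hA1m]
          rfl
      _ = lamF ν K hA1 := (bridge hK_meas hK_pos hK_int hρ1 hρap hA1m hA1le).symm
      _ = lamF ν K (A.indicator fun _ => 1) := by
          rw [hA1P]
          refine lamF_shift hK_meas hK_pos hK_int (measurable_one.indicator hA) fun θ => ?_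
          by_cases hθ : θ ∈ A <;> simp [hθ]
      _ = ρ A := (hρap A hA).symm
  have hinv : Pd =ᵐ[ν] S' :=
    ae_eq_of_forall_setLIntegral_eq_of_sigmaFinite hPdm hS'm
      fun s hs _ => (hPdset s hs).trans (hS'set s hs).symm
  set S : Θ → ℝ := fun θ => (S' θ).toReal with hSdef
  have hSint : Integrable S ν :=
    integrable_toReal_of_lintegral_ne_top hS'm.aemeasurable
      (by rw [hS'tot]; exact ENNReal.one_ne_top)
  have hsupp : 0 < ν (Function.support S') := by
    rw [pos_iff_ne_zero]
    intro h0
    have hz : S' =ᵐ[ν] 0 := by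
      rw [Filter.EventuallyEq, ae_iff]
      simp only [Pi.zero_apply]
      have : {a | ¬ S' a = 0} = Function.support S' := by
        ext θ; simp [Function.mem_support]
      rw [this]
      exact h0
    rw [lintegral_congr_ae hz] at hS'tot
    simp at hS'tot
  have hPd_pos : ∀ θ, 0 < Pd θ := by
    intro θ
    show 0 < ∫⁻ θ', Kq K θ' θ * S' θ' ∂ν
    rw [lintegral_pos_iff_support (f := fun θ' => Kq K θ' θ * S' θ') ((Kq_fst_meas hK_meas θ).mul hS'm)]
    refine lt_of_lt_of_le hsupp (measure_mono ?_)
    intro θ' h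
    simp only [Function.mem_support] at h ⊢
    exact mul_ne_zero (ENNReal.ofReal_pos.2 (hK_pos θ' θ)).ne' h
  have hae_pos : ∀ᵐ θ ∂ν, 0 < S θ := by
    filter_upwards [hinv, hS'fin] with θ h hfin
    have h1 : 0 < S' θ := h ▸ hPd_pos θ
    exact ENNReal.toReal_pos h1.ne' hfin.ne
  have heig : (fun θ => ∫ θ', K θ' θ * S θ' ∂ν) =ᵐ[ν] S := by
    have hpt : ∀ θ, ∫ θ', K θ' θ * S θ' ∂ν = (Pd θ).toReal := by
      intro θ
      rw [integral_eq_lintegral_of_nonneg_ae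
        (ae_of_all _ fun θ' => mul_nonneg (hK_pos θ' θ).le ENNReal.toReal_nonneg)
        (((Kcol_meas hK_meas θ).mul hS'm.ennreal_toReal).aestronglyMeasurable)]
      congr 1
      refine lintegral_congr_ae ?_
      filter_upwards [hS'fin] with θ' hf
      rw [ENNReal.ofReal_mul (hK_pos θ' θ).le, ENNReal.ofReal_toReal hf.ne]
      rfl
    filter_upwards [hinv] with θ h
    rw [hpt θ, h]
  exact ⟨S, hSint, hae_pos, heig⟩

end Exist

section Op

variable {Θ : Type*} [MeasurableSpace Θ] {ν : Measure Θ} [IsProbabilityMeasure ν]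
  {K : Θ → Θ → ℝ}

/-- The operator `T` as a linear map on `L¹(ν)`. -/
noncomputable def Tl (hK_meas : Measurable fun p : Θ × Θ => K p.1 p.2)
    (hK_pos : ∀ θ θ', 0 < K θ θ') (hK_int : ∀ θ, ∫ θ', K θ θ' ∂ν = 1)
    (hK_bdd : ∀ θ, BddAbove (Set.range fun θ' => K θ' θ)) :
    Lp ℝ 1 ν →ₗ[ℝ] Lp ℝ 1 ν where
  toFun B := (P_integrable hK_meas hK_pos hK_int (L1.integrable_coeFn B)).toL1 (P ν K ⇑B)
  map_add' B C := by
    rw [← Integrable.toL1_add _ _ (P_integrable hK_meas hK_pos hK_int (L1.integrable_coeFn B))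
      (P_integrable hK_meas hK_pos hK_int (L1.integrable_coeFn C))]
    rw [Integrable.toL1_eq_toL1_iff]
    have h1 : P ν K ⇑(B + C) = P ν K (fun θ => (B : Θ → ℝ) θ + (C : Θ → ℝ) θ) :=
      P_congr (by filter_upwards [Lp.coeFn_add B C] with θ h; exact h)
    rw [h1]
    refine ae_of_all _ fun θ => ?_
    show ∫ θ', K θ' θ * ((B : Θ → ℝ) θ' + (C : Θ → ℝ) θ') ∂ν
      = (P ν K ⇑B + P ν K ⇑C) θ
    have h2 : (fun θ' => K θ' θ * ((B : Θ → ℝ) θ' + (C : Θ → ℝ) θ'))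
        = fun θ' => K θ' θ * (B : Θ → ℝ) θ' + K θ' θ * (C : Θ → ℝ) θ' := by
      funext θ'; ring
    rw [h2, integral_add (int_mul hK_meas hK_pos hK_bdd (L1.integrable_coeFn B) θ)
      (int_mul hK_meas hK_pos hK_bdd (L1.integrable_coeFn C) θ)]
    rfl
  map_smul' c B := by
    simp only [RingHom.id_apply]
    rw [← Integrable.toL1_smul' _ (P_integrable hK_meas hK_pos hK_int (L1.integrable_coeFn B)) c]
    rw [Integrable.toL1_eq_toL1_iff]
    have h1 : P ν K ⇑(c • B) = P ν K (c • (B : Θ → ℝ)) := P_congr (Lp.coeFn_smul c B)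
    rw [h1]
    refine ae_of_all _ fun θ => ?_
    show ∫ θ', K θ' θ * (c • (B : Θ → ℝ)) θ' ∂ν = (c • P ν K ⇑B) θ
    have h2 : (fun θ' => K θ' θ * (c • (B : Θ → ℝ)) θ')
        = fun θ' => c * (K θ' θ * (B : Θ → ℝ) θ') := by
      funext θ'; simp only [Pi.smul_apply, smul_eq_mul]; ring
    rw [h2, integral_const_mul]
    rfl

lemma Tl_norm_le (hK_meas : Measurable fun p : Θ × Θ => K p.1 p.2)
    (hK_pos : ∀ θ θ', 0 < K θ θ') (hK_int : ∀ θ, ∫ θ', K θ θ' ∂ν = 1)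
    (hK_bdd : ∀ θ, BddAbove (Set.range fun θ' => K θ' θ)) (B : Lp ℝ 1 ν) :
    ‖Tl hK_meas hK_pos hK_int hK_bdd B‖ ≤ 1 * ‖B‖ := by
  rw [one_mul]
  have hB := L1.integrable_coeFn B
  have hPB := P_integrable hK_meas hK_pos hK_int hB
  have h1 : ‖Tl hK_meas hK_pos hK_int hK_bdd B‖ = ∫ θ, ‖P ν K ⇑B θ‖ ∂ν := by
    rw [L1.norm_eq_integral_norm]
    refine integral_congr_ae ?_
    filter_upwards [hPB.coeFn_toL1] with θ h
    rw [show ((Tl hK_meas hK_pos hK_int hK_bdd B : Lp ℝ 1 ν) : Θ → ℝ) θ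
      = (hPB.toL1 (P ν K ⇑B) : Θ → ℝ) θ from rfl, h]
  rw [h1, L1.norm_eq_integral_norm]
  calc ∫ θ, ‖P ν K ⇑B θ‖ ∂ν ≤ ∫ θ, P ν K (fun t => |(B : Θ → ℝ) t|) θ ∂ν := by
        refine integral_mono hPB.norm (P_integrable hK_meas hK_pos hK_int hB.abs) fun θ => ?_
        rw [Real.norm_eq_abs]
        exact P_abs_le hK_pos θ
    _ = ∫ θ, |(B : Θ → ℝ) θ| ∂ν := P_integral_eq hK_meas hK_pos hK_int hB.abs
    _ = ∫ θ, ‖(B : Θ → ℝ) θ‖ ∂ν := by simp_rw [Real.norm_eq_abs]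

/-- The operator `T` as a continuous linear map on `L¹(ν)`. -/
noncomputable def Tc (hK_meas : Measurable fun p : Θ × Θ => K p.1 p.2)
    (hK_pos : ∀ θ θ', 0 < K θ θ') (hK_int : ∀ θ, ∫ θ', K θ θ' ∂ν = 1)
    (hK_bdd : ∀ θ, BddAbove (Set.range fun θ' => K θ' θ)) :
    Lp ℝ 1 ν →L[ℝ] Lp ℝ 1 ν :=
  (Tl hK_meas hK_pos hK_int hK_bdd).mkContinuous 1
    (Tl_norm_le hK_meas hK_pos hK_int hK_bdd)

lemma Tc_coeFn (hK_meas : Measurable fun p : Θ × Θ => K p.1 p.2)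
    (hK_pos : ∀ θ θ', 0 < K θ θ') (hK_int : ∀ θ, ∫ θ', K θ θ' ∂ν = 1)
    (hK_bdd : ∀ θ, BddAbove (Set.range fun θ' => K θ' θ)) (B : Lp ℝ 1 ν) :
    (Tc hK_meas hK_pos hK_int hK_bdd B : Θ → ℝ) =ᵐ[ν] P ν K ⇑B :=
  (P_integrable hK_meas hK_pos hK_int (L1.integrable_coeFn B)).coeFn_toL1

lemma exists_T (hK_meas : Measurable fun p : Θ × Θ => K p.1 p.2)
    (hK_pos : ∀ θ θ', 0 < K θ θ') (hK_int : ∀ θ, ∫ θ', K θ θ' ∂ν = 1)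
    (hK_bdd : ∀ θ, BddAbove (Set.range fun θ' => K θ' θ))
    {S : Θ → ℝ} (hSint : Integrable S ν) (hSpos : ∀ᵐ θ ∂ν, 0 < S θ)
    (hSinv : (fun θ => ∫ θ', K θ' θ * S θ' ∂ν) =ᵐ[ν] S) :
    ∃ T : Lp ℝ 1 ν →L[ℝ] Lp ℝ 1 ν,
      (∀ B : Lp ℝ 1 ν, (T B : Θ → ℝ) =ᵐ[ν] fun θ => ∫ θ', K θ' θ * B θ' ∂ν)
      ∧ spectralRadius ℝ T = 1 := by
  haveI hne : (ae ν).NeBot := ae_neBot.2 (IsProbabilityMeasure.ne_zero ν)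
  set T := Tc hK_meas hK_pos hK_int hK_bdd with hT
  refine ⟨T, fun B => Tc_coeFn hK_meas hK_pos hK_int hK_bdd B, ?_⟩
  -- Nontriviality of L¹
  haveI : Nontrivial (Lp ℝ 1 ν) := by
    have hc : Integrable (fun _ : Θ => (1 : ℝ)) ν := integrable_const 1
    refine ⟨hc.toL1 (fun _ : Θ => (1 : ℝ)), 0, fun h => ?_⟩
    have h1 : (fun _ : Θ => (1 : ℝ)) =ᵐ[ν] 0 := by
      have h2 : (hc.toL1 (fun _ : Θ => (1 : ℝ)) : Θ → ℝ) =ᵐ[ν] fun _ : Θ => (1 : ℝ) :=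
        hc.coeFn_toL1
      have h3 : (hc.toL1 (fun _ : Θ => (1 : ℝ)) : Θ → ℝ) =ᵐ[ν] (0 : Lp ℝ 1 ν) := by
        rw [h]
      exact (h2.symm.trans h3).trans (Lp.coeFn_zero ℝ 1 ν)
    obtain ⟨θ, hθ⟩ := h1.exists
    simpa using hθ
  -- eigenvector
  set v : Lp ℝ 1 ν := hSint.toL1 S with hv
  have hvS : (v : Θ → ℝ) =ᵐ[ν] S := hSint.coeFn_toL1
  have hTv : T v = v := by
    refine Lp.ext ?_
    have h1 : (T v : Θ → ℝ) =ᵐ[ν] P ν K ⇑v := Tc_coeFn hK_meas hK_pos hK_int hK_bdd v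
    have h2 : P ν K ⇑v = P ν K S := P_congr hvS
    refine h1.trans ?_
    rw [h2]
    exact hSinv.trans hvS.symm
  have hv0 : v ≠ 0 := by
    intro h
    have h1 : S =ᵐ[ν] 0 := by
      refine hvS.symm.trans ?_
      rw [h]
      exact Lp.coeFn_zero ℝ 1 ν
    obtain ⟨θ, hθ1, hθ2⟩ := (hSpos.and h1).exists
    simp only [Pi.zero_apply] at hθ2
    rw [hθ2] at hθ1
    exact lt_irrefl 0 hθ1
  have hmem : (1 : ℝ) ∈ spectrum ℝ T := by
    rw [spectrum.mem_iff]
    intro hu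
    obtain ⟨u, hu⟩ := hu
    have h0 : (algebraMap ℝ (Lp ℝ 1 ν →L[ℝ] Lp ℝ 1 ν) 1 - T) v = 0 := by
      rw [map_one, ContinuousLinearMap.sub_apply, ContinuousLinearMap.one_apply, hTv, sub_self]
    have h1 : v = ((↑u⁻¹ * ↑u : Lp ℝ 1 ν →L[ℝ] Lp ℝ 1 ν)) v := by
      rw [u.inv_mul]
      exact (ContinuousLinearMap.one_apply v).symm
    rw [ContinuousLinearMap.mul_apply, hu, h0, map_zero] at h1
    exact hv0 h1
  refine le_antisymm ?_ ?_
  · -- spectralRadius ≤ 1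
    refine le_trans (spectrum.spectralRadius_le_nnnorm (𝕜 := ℝ) T) ?_
    have hn : ‖T‖ ≤ 1 := LinearMap.mkContinuous_norm_le _ zero_le_one _
    have hn' : ‖T‖₊ ≤ 1 := hn
    exact_mod_cast hn'
  · -- 1 ≤ spectralRadius
    have h1 : (‖(1 : ℝ)‖₊ : ℝ≥0∞) ≤ spectralRadius ℝ T := by
      rw [spectralRadius]
      exact le_iSup₂ (f := fun k (_ : k ∈ spectrum ℝ T) => (‖k‖₊ : ℝ≥0∞)) (1 : ℝ) hmem
    simpa using h1

end Op


/-- The measure `da ⊗ ν` on `ℝ₊ × Θ`. -/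
noncomputable def ageProd {Θ : Type*} [MeasurableSpace Θ] (ν : Measure Θ) :
    Measure (ℝ × Θ) :=
  (volume.restrict (Set.Ioi (0 : ℝ))).prod ν

/-- Perron–Frobenius type result for the kernel operator
`T(B)(θ) = ∫_Θ K(θ',θ) B(θ') ν(dθ')`: its spectral radius is `1`, `1` is an eigenvalue with a
ν-a.e. positive eigenfunction in `L¹(ν)`, any two eigenfunctions for the eigenvalue `1` are
ν-a.e. proportional, and, provided `0 < ∫_{ℝ₊×Θ} λ(a,θ) S(θ) da ν(dθ) < ∞` for some ν-a.e.
positive eigenfunction `S`, there is a (ν-a.e.) unique ν-a.e. positive eigenfunction `𝔖_*`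
normalized by `∫_{ℝ₊×Θ} λ(a,θ) 𝔖_*(θ) da ν(dθ) = 1`. -/
theorem perron_frobenius {Θ : Type*} [MeasurableSpace Θ]
    (ν : Measure Θ) [IsProbabilityMeasure ν]
    (lamStar : ℝ) (hlamStar : 0 < lamStar)
    (lam : ℝ → Θ → ℝ)
    (hlam_meas : Measurable fun p : ℝ × Θ => lam p.1 p.2)
    (hlam_nonneg : ∀ a θ, 0 ≤ lam a θ)
    (hlam_bdd : ∀ a θ, lam a θ ≤ lamStar)
    (K : Θ → Θ → ℝ)
    (hK_meas : Measurable fun p : Θ × Θ => K p.1 p.2)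
    (hK_pos : ∀ θ θ', 0 < K θ θ')
    (hK_int : ∀ θ, ∫ θ', K θ θ' ∂ν = 1)
    (hK_bdd : ∀ θ, BddAbove (Set.range fun θ' => K θ' θ))
    (hK_sup_int : Integrable (fun θ => ⨆ θ', K θ' θ) ν) :
    -- the spectral radius of `T` equals 1
    (∃ T : Lp ℝ 1 ν →L[ℝ] Lp ℝ 1 ν,
      (∀ B : Lp ℝ 1 ν, (T B : Θ → ℝ) =ᵐ[ν] fun θ => ∫ θ', K θ' θ * B θ' ∂ν)
      ∧ spectralRadius ℝ T = 1)
    -- `1` is an eigenvalue of `T` with a ν-a.e. positive eigenfunction in `L¹(ν)`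
    ∧ (∃ S : Θ → ℝ, Integrable S ν ∧ (∀ᵐ θ ∂ν, 0 < S θ)
        ∧ (fun θ => ∫ θ', K θ' θ * S θ' ∂ν) =ᵐ[ν] S)
    -- any two eigenfunctions for the eigenvalue `1` are ν-a.e. proportional
    ∧ (∀ S₁ S₂ : Θ → ℝ, Integrable S₁ ν → Integrable S₂ ν →
        ¬ (S₁ =ᵐ[ν] 0) → ¬ (S₂ =ᵐ[ν] 0) →
        ((fun θ => ∫ θ', K θ' θ * S₁ θ' ∂ν) =ᵐ[ν] S₁) →
        ((fun θ => ∫ θ', K θ' θ * S₂ θ' ∂ν) =ᵐ[ν] S₂) →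
        ∃ c : ℝ, S₁ =ᵐ[ν] fun θ => c * S₂ θ)
    -- normalized eigenfunction, unique up to ν-a.e. equality
    ∧ ((∃ S : Θ → ℝ, Integrable S ν ∧ (∀ᵐ θ ∂ν, 0 < S θ)
          ∧ ((fun θ => ∫ θ', K θ' θ * S θ' ∂ν) =ᵐ[ν] S)
          ∧ Integrable (fun p : ℝ × Θ => lam p.1 p.2 * S p.2) (ageProd ν)
          ∧ 0 < ∫ p, lam p.1 p.2 * S p.2 ∂(ageProd ν)) →
        ∃ Sstar : Θ → ℝ,
          (Integrable Sstar ν ∧ (∀ᵐ θ ∂ν, 0 < Sstar θ)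
            ∧ ((fun θ => ∫ θ', K θ' θ * Sstar θ' ∂ν) =ᵐ[ν] Sstar)
            ∧ ∫ p, lam p.1 p.2 * Sstar p.2 ∂(ageProd ν) = 1)
          ∧ ∀ S' : Θ → ℝ,
              (Integrable S' ν ∧ (∀ᵐ θ ∂ν, 0 < S' θ)
                ∧ ((fun θ => ∫ θ', K θ' θ * S' θ' ∂ν) =ᵐ[ν] S')
                ∧ ∫ p, lam p.1 p.2 * S' p.2 ∂(ageProd ν) = 1) →
              S' =ᵐ[ν] Sstar) := by
  haveI hne : (ae ν).NeBot := ae_neBot.2 (IsProbabilityMeasure.ne_zero ν)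
  obtain ⟨S0, hS0int, hS0pos, hS0inv⟩ :=
    exists_positive_eigenfunction hK_meas hK_pos hK_int hK_bdd hK_sup_int
  refine ⟨exists_T hK_meas hK_pos hK_int hK_bdd hS0int hS0pos hS0inv,
    ⟨S0, hS0int, hS0pos, hS0inv⟩, ?_, ?_⟩
  · intro S₁ S₂ h1 h2 hnz1 hnz2 hi1 hi2
    exact eigen_proportional hK_meas hK_pos hK_int hK_bdd h1 h2 hnz1 hnz2 hi1 hi2
  · rintro ⟨S, hSint, hSpos, hSinv, hSlam_int, hSlam_pos⟩
    set I := ∫ p, lam p.1 p.2 * S p.2 ∂(ageProd ν) with hI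
    have hIpos : 0 < I := hSlam_pos
    set Sstar : Θ → ℝ := fun θ => I⁻¹ * S θ with hSstar
    have hstar_int : Integrable Sstar ν := hSint.const_mul _
    have hstar_pos : ∀ᵐ θ ∂ν, 0 < Sstar θ := by
      filter_upwards [hSpos] with θ h
      exact mul_pos (inv_pos.2 hIpos) h
    have hstar_inv : (fun θ => ∫ θ', K θ' θ * Sstar θ' ∂ν) =ᵐ[ν] Sstar := by
      have hpt : ∀ θ, ∫ θ', K θ' θ * Sstar θ' ∂ν = I⁻¹ * ∫ θ', K θ' θ * S θ' ∂ν := by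
        intro θ
        rw [show (fun θ' => K θ' θ * Sstar θ') = fun θ' => I⁻¹ * (K θ' θ * S θ') from
          funext fun θ' => by simp only [hSstar]; ring, integral_const_mul]
      filter_upwards [hSinv] with θ h
      rw [hpt θ, h]
    have hstar_norm : ∫ p, lam p.1 p.2 * Sstar p.2 ∂(ageProd ν) = 1 := by
      have h2 : (fun p : ℝ × Θ => lam p.1 p.2 * Sstar p.2)
          = fun p => I⁻¹ * (lam p.1 p.2 * S p.2) := funext fun p => by
        simp only [hSstar]; ring
      rw [h2, integral_const_mul, ← hI, inv_mul_cancel₀ hIpos.ne']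
    refine ⟨Sstar, ⟨hstar_int, hstar_pos, hstar_inv, hstar_norm⟩, ?_⟩
    rintro S' ⟨h'int, h'pos, h'inv, h'norm⟩
    have hnzstar : ¬ Sstar =ᵐ[ν] 0 := by
      intro hcon
      obtain ⟨θ, hθ1, hθ2⟩ := (hstar_pos.and hcon).exists
      simp only [Pi.zero_apply] at hθ2
      rw [hθ2] at hθ1
      exact lt_irrefl 0 hθ1
    have hnz' : ¬ S' =ᵐ[ν] 0 := by
      intro hcon
      obtain ⟨θ, hθ1, hθ2⟩ := (h'pos.and hcon).exists
      simp only [Pi.zero_apply] at hθ2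
      rw [hθ2] at hθ1
      exact lt_irrefl 0 hθ1
    obtain ⟨c, hc⟩ := eigen_proportional hK_meas hK_pos hK_int hK_bdd h'int hstar_int
      hnz' hnzstar h'inv hstar_inv
    have hlift : ∀ᵐ p ∂(ageProd ν), S' p.2 = c * Sstar p.2 := by
      have hbad : ν {θ | ¬ S' θ = c * Sstar θ} = 0 := by
        have h3 := hc
        rw [Filter.EventuallyEq, ae_iff] at h3
        exact h3
      rw [ae_iff]
      set N := toMeasurable ν {θ | ¬ S' θ = c * Sstar θ} with hNdef
      have hN : ν N = 0 := by rw [hNdef, measure_toMeasurable]; exact hbad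
      have hsub : {p : ℝ × Θ | ¬ S' p.2 = c * Sstar p.2} ⊆ (univ : Set ℝ) ×ˢ N :=
        fun p hp => ⟨trivial, subset_toMeasurable _ _ hp⟩
      refine measure_mono_null hsub ?_
      rw [ageProd, Measure.prod_prod, hN, mul_zero]
    have h1 : ∫ p, lam p.1 p.2 * S' p.2 ∂(ageProd ν)
        = c * ∫ p, lam p.1 p.2 * Sstar p.2 ∂(ageProd ν) := by
      rw [← integral_const_mul]
      refine integral_congr_ae ?_
      filter_upwards [hlift] with p hp
      rw [hp]; ring
    rw [h'norm, hstar_norm, mul_one] at h1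
    filter_upwards [hc] with θ h
    rw [h, ← h1, one_mul]


end Stmt6
end

section
/- Let 0 < β ≤ α ≤ 1 and 0 < T_R < T_V be real numbers, and let γ(a) = α·1_{T_R < a < T_V} + β·1_{a ≥ T_V} (independent of θ). Then: (i) the function H satisfies H(x) = κ(x T_R + 1/α − (1/α − 1/β)·e^{−xα(T_V − T_R)}) for all x > 0, where κ = ∫_Θ 𝔖_*(θ) ν(dθ); (ii) H is nondecreasing on (0,∞) if and only if β T_V ≥ α(T_V − T_R); (iii) the inequality γ(a) ≥ (1/a)∫_0^a γ(s) ds holds for all a > 0 if and only if β T_V ≥ α(T_V − T_R). -/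
open MeasureTheory Set Filter
open scoped Topology

namespace Stmt11

/-- `H(x) = x ∫_{ℝ₊×Θ} exp(−x ∫_0^a γ(s) ds) 𝔖_*(θ) da ν(dθ)` for a susceptibility curve `γ`
not depending on the trait `θ`. -/
noncomputable def H {Θ : Type*} [MeasurableSpace Θ] (ν : Measure Θ)
    (γ : ℝ → ℝ) (Sstar : Θ → ℝ) (x : ℝ) : ℝ :=
  x * ∫ a in Set.Ioi (0 : ℝ), ∫ θ,
        Real.exp (-(x * ∫ s in Set.Ioc (0 : ℝ) a, γ s)) * Sstar θ ∂ν

lemma Gval (α β T_R T_V : ℝ) (hTR : 0 < T_R) (hTRV : T_R < T_V)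
    (γ : ℝ → ℝ)
    (hγ : ∀ a : ℝ, γ a = if T_R < a ∧ a < T_V then α else if T_V ≤ a then β else 0)
    (a : ℝ) :
    (∫ s in Set.Ioc (0:ℝ) a, γ s) =
      if a ≤ T_R then 0 else if a < T_V then α*(a-T_R) else α*(T_V-T_R)+β*(a-T_V) := by
  have hγ' : γ = fun s => (Ioo T_R T_V).indicator (fun _ => α) s
      + (Ici T_V).indicator (fun _ => β) s := by
    funext s
    rw [hγ]
    by_cases h1 : T_R < s ∧ s < T_V
    · simp [indicator_apply, mem_Ioo, mem_Ici, h1, not_le.2 h1.2]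
    · by_cases h2 : T_V ≤ s
      · simp [indicator_apply, mem_Ioo, mem_Ici, h1, h2, not_lt.2 h2]
      · simp [indicator_apply, mem_Ioo, mem_Ici, h1, h2]
  rw [hγ']
  have hi1 : Integrable ((Ioo T_R T_V).indicator (fun _ => α))
      (volume.restrict (Ioc (0:ℝ) a)) :=
    (integrableOn_const measure_Ioc_lt_top.ne).indicator measurableSet_Ioo
  have hi2 : Integrable ((Ici T_V).indicator (fun _ => β))
      (volume.restrict (Ioc (0:ℝ) a)) :=
    (integrableOn_const measure_Ioc_lt_top.ne).indicator measurableSet_Ici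
  rw [integral_add hi1 hi2, setIntegral_indicator measurableSet_Ioo,
    setIntegral_indicator measurableSet_Ici, setIntegral_const, setIntegral_const]
  rcases le_or_gt a T_R with h | h
  · have e1 : Ioc (0:ℝ) a ∩ Ioo T_R T_V = ∅ := by
      ext s
      simp only [mem_inter_iff, mem_Ioc, mem_Ioo, mem_empty_iff_false, iff_false, not_and]
      rintro ⟨_, h2⟩ h3
      intro; linarith
    have e2 : Ioc (0:ℝ) a ∩ Ici T_V = ∅ := by
      ext s
      simp only [mem_inter_iff, mem_Ioc, mem_Ici, mem_empty_iff_false, iff_false, not_and]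
      rintro ⟨_, h2⟩
      intro; linarith
    simp [e1, e2, h]
  · rcases lt_or_ge a T_V with h2 | h2
    · have e1 : Ioc (0:ℝ) a ∩ Ioo T_R T_V = Ioc T_R a := by
        ext s
        simp only [mem_inter_iff, mem_Ioc, mem_Ioo]
        constructor
        · rintro ⟨⟨_, hsa⟩, hTRs, _⟩; exact ⟨hTRs, hsa⟩
        · rintro ⟨hTRs, hsa⟩; exact ⟨⟨by linarith, hsa⟩, hTRs, by linarith⟩
      have e2 : Ioc (0:ℝ) a ∩ Ici T_V = ∅ := by
        ext s
        simp only [mem_inter_iff, mem_Ioc, mem_Ici, mem_empty_iff_false, iff_false, not_and]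
        rintro ⟨_, hsa⟩
        intro; linarith
      rw [e1, e2]
      simp only [measureReal_def, Real.volume_Ioc, measure_empty, ENNReal.toReal_zero, zero_smul, add_zero,
        smul_eq_mul]
      rw [ENNReal.toReal_ofReal (by linarith)]
      rw [if_neg (not_le.2 h), if_pos h2]
      ring
    · have e1 : Ioc (0:ℝ) a ∩ Ioo T_R T_V = Ioo T_R T_V := by
        ext s
        simp only [mem_inter_iff, mem_Ioc, mem_Ioo, and_iff_right_iff_imp]
        rintro ⟨hTRs, hsTV⟩
        exact ⟨by linarith, by linarith⟩
      have e2 : Ioc (0:ℝ) a ∩ Ici T_V = Icc T_V a := by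
        ext s
        simp only [mem_inter_iff, mem_Ioc, mem_Ici, mem_Icc]
        constructor
        · rintro ⟨⟨_, hsa⟩, hTVs⟩; exact ⟨hTVs, hsa⟩
        · rintro ⟨hTVs, hsa⟩; exact ⟨⟨by linarith, hsa⟩, hTVs⟩
      rw [e1, e2]
      simp only [measureReal_def, Real.volume_Ioo, Real.volume_Icc, smul_eq_mul]
      rw [ENNReal.toReal_ofReal (by linarith), ENNReal.toReal_ofReal (by linarith)]
      rw [if_neg (not_le.2 h), if_neg (not_lt.2 h2)]
      ring


lemma expint (α β T_R T_V : ℝ) (hβ : 0 < β) (hα0 : 0 < α) (hTR : 0 < T_R) (hTRV : T_R < T_V)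
    (x : ℝ) (hx : 0 < x) :
    (∫ a in Set.Ioi (0:ℝ), Real.exp (-(x * (if a ≤ T_R then (0:ℝ)
        else if a < T_V then α*(a-T_R) else α*(T_V-T_R)+β*(a-T_V)))))
      = T_R + (1 - Real.exp (-(x*α*(T_V-T_R))))/(x*α)
        + Real.exp (-(x*α*(T_V-T_R)))/(x*β) := by
  set g : ℝ → ℝ := fun a => Real.exp (-(x * (if a ≤ T_R then (0:ℝ)
      else if a < T_V then α*(a-T_R) else α*(T_V-T_R)+β*(a-T_V)))) with hg
  have hxβ : 0 < x*β := by positivity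
  have hxα : 0 < x*α := by positivity
  -- piece 1
  have e1 : EqOn g (fun _ => (1:ℝ)) (Ioc (0:ℝ) T_R) := by
    intro a ha
    simp [hg, ha.2]
  have I1 : ∫ a in Ioc (0:ℝ) T_R, g a = T_R := by
    rw [setIntegral_congr_fun measurableSet_Ioc e1, setIntegral_const]
    simp [Real.volume_Ioc, ENNReal.toReal_ofReal hTR.le, hTR.le]
  -- piece 2
  have e2 : EqOn g (fun a => Real.exp (-(x*α*(a-T_R)))) (Ioc T_R T_V) := by
    intro a ha
    by_cases h : a < T_V
    · simp only [hg, if_neg (not_le.2 ha.1), if_pos h]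
      ring_nf
    · have hav : a = T_V := le_antisymm ha.2 (not_lt.1 h)
      subst hav
      simp only [hg, if_neg (not_le.2 ha.1), if_neg h]
      ring_nf
  have I2 : ∫ a in Ioc T_R T_V, g a
      = (1 - Real.exp (-(x*α*(T_V-T_R))))/(x*α) := by
    rw [setIntegral_congr_fun measurableSet_Ioc e2,
      ← intervalIntegral.integral_of_le hTRV.le]
    have hder : ∀ a ∈ Set.uIcc T_R T_V, HasDerivAt
        (fun a => Real.exp (-(x*α*(a-T_R)))/(-(x*α)))
        (Real.exp (-(x*α*(a-T_R)))) a := by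
      intro a _
      have h1 : HasDerivAt (fun a : ℝ => -(x*α*(a-T_R))) (-(x*α)) a := by
        simpa using (((hasDerivAt_id a).sub_const T_R).const_mul (x*α)).fun_neg
      have := h1.exp.div_const (-(x*α))
      convert this using 1
      · rfl
      · rfl
      · field_simp
    rw [intervalIntegral.integral_eq_sub_of_hasDerivAt hder
      (Continuous.intervalIntegrable (by continuity) _ _)]
    field_simp
    rw [sub_self, mul_zero, neg_zero, Real.exp_zero]; ring
  -- piece 3
  have key3 : ∫ a in Ioi T_V, Real.exp (-(x*(α*(T_V-T_R)+β*(a-T_V))))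
      = Real.exp (-(x*α*(T_V-T_R)))/(x*β) := by
    have hint : IntegrableOn (fun a => Real.exp (-(x*(α*(T_V-T_R)+β*(a-T_V))))) (Ioi T_V) := by
      have hbase := (exp_neg_integrableOn_Ioi T_V hxβ).const_mul
        (Real.exp (x*β*T_V - x*α*(T_V-T_R)))
      refine MeasureTheory.IntegrableOn.congr_fun hbase (fun a _ => ?_) measurableSet_Ioi
      rw [← Real.exp_add]
      congr 1
      ring
    have hder : ∀ a ∈ Ici T_V, HasDerivAt
        (fun a => Real.exp (-(x*(α*(T_V-T_R)+β*(a-T_V))))/(-(x*β)))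
        (Real.exp (-(x*(α*(T_V-T_R)+β*(a-T_V))))) a := by
      intro a _
      have h1 : HasDerivAt (fun a : ℝ => -(x*(α*(T_V-T_R)+β*(a-T_V)))) (-(x*β)) a := by
        have := ((((hasDerivAt_id a).sub_const T_V).const_mul β).const_add
          (α*(T_V-T_R))).const_mul x
        simpa using this.fun_neg
      have := h1.exp.div_const (-(x*β))
      convert this using 1
      · rfl
      · rfl
      · field_simp
    have hlin : Tendsto (fun a : ℝ => -(x*(α*(T_V-T_R)+β*(a-T_V)))) atTop atBot := by
      have h0 : Tendsto (fun a : ℝ => -(x*β) * a + (x*β*T_V - x*α*(T_V-T_R))) atTop atBot :=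
        (tendsto_id.const_mul_atTop_of_neg (by linarith : -(x*β) < 0)).atBot_add
          tendsto_const_nhds
      refine h0.congr (fun a => ?_)
      ring
    have htend : Tendsto (fun a => Real.exp (-(x*(α*(T_V-T_R)+β*(a-T_V))))/(-(x*β)))
        atTop (𝓝 0) := by
      simpa using (Real.tendsto_exp_atBot.comp hlin).div_const (-(x*β))
    rw [integral_Ioi_of_hasDerivAt_of_tendsto' hder hint htend]
    simp only [sub_self, mul_zero, add_zero, zero_sub]
    rw [div_neg, neg_neg, mul_assoc]
  have e3 : EqOn g (fun a => Real.exp (-(x*(α*(T_V-T_R)+β*(a-T_V))))) (Ioi T_V) := by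
    intro a ha
    simp only [hg, if_neg (by push_neg; linarith [mem_Ioi.1 ha] : ¬ a ≤ T_R),
      if_neg (not_lt.2 (le_of_lt (mem_Ioi.1 ha)))]
  have I3 : ∫ a in Ioi T_V, g a = Real.exp (-(x*α*(T_V-T_R)))/(x*β) := by
    rw [setIntegral_congr_fun measurableSet_Ioi e3, key3]
  -- integrability of pieces
  have int1 : IntegrableOn g (Ioc (0:ℝ) T_R) :=
    ((integrableOn_const measure_Ioc_lt_top.ne) :
      IntegrableOn (fun _ => (1:ℝ)) _ _).congr_fun e1.symm measurableSet_Ioc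
  have int2 : IntegrableOn g (Ioc T_R T_V) :=
    (((Continuous.integrableOn_Ioc (by continuity)) :
      IntegrableOn (fun a => Real.exp (-(x*α*(a-T_R)))) _ _)).congr_fun e2.symm measurableSet_Ioc
  have int3 : IntegrableOn g (Ioi T_V) := by
    have hbase := (exp_neg_integrableOn_Ioi T_V hxβ).const_mul
      (Real.exp (x*β*T_V - x*α*(T_V-T_R)))
    refine MeasureTheory.IntegrableOn.congr_fun hbase (fun a ha => ?_) measurableSet_Ioi
    rw [e3 ha, ← Real.exp_add]
    congr 1
    ring
  -- splitting
  have hsp1 : Ioc (0:ℝ) T_R ∪ Ioc T_R T_V = Ioc 0 T_V := Ioc_union_Ioc_eq_Ioc hTR.le hTRV.le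
  have hsp2 : Ioc (0:ℝ) T_V ∪ Ioi T_V = Ioi 0 := Ioc_union_Ioi_eq_Ioi (by linarith)
  have hd1 : Disjoint (Ioc (0:ℝ) T_R) (Ioc T_R T_V) := by
    rw [Set.disjoint_left]
    rintro s ⟨_, h1⟩ ⟨h2, _⟩
    linarith
  have hd2 : Disjoint (Ioc (0:ℝ) T_V) (Ioi T_V) := by
    rw [Set.disjoint_left]
    rintro s ⟨_, h1⟩ h2
    exact absurd (mem_Ioi.1 h2) (not_lt.2 h1)
  calc ∫ a in Ioi (0:ℝ), g a = ∫ a in Ioc (0:ℝ) T_V ∪ Ioi T_V, g a := by rw [hsp2]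
    _ = (∫ a in Ioc (0:ℝ) T_V, g a) + ∫ a in Ioi T_V, g a := by
        rw [setIntegral_union hd2 measurableSet_Ioi (hsp1 ▸ (int1.union int2)) int3]
    _ = ((∫ a in Ioc (0:ℝ) T_R, g a) + ∫ a in Ioc T_R T_V, g a) + ∫ a in Ioi T_V, g a := by
        rw [← hsp1, setIntegral_union hd1 measurableSet_Ioc int1 int2]
    _ = T_R + (1 - Real.exp (-(x*α*(T_V-T_R))))/(x*α)
        + Real.exp (-(x*α*(T_V-T_R)))/(x*β) := by rw [I1, I2, I3]


/-- Explicit computation of `H` for the one-shot-vaccination susceptibility curve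
`γ(a) = α 1_{T_R < a < T_V} + β 1_{a ≥ T_V}`, together with the characterization of the
monotonicity of `H` and of the averaging inequality by the condition `β T_V ≥ α (T_V − T_R)`. -/
theorem one_shot_vaccination {Θ : Type*} [MeasurableSpace Θ]
    (ν : Measure Θ) [IsProbabilityMeasure ν]
    (Sstar : Θ → ℝ) (hSstar_int : Integrable Sstar ν)
    (hSstar_pos : ∀ᵐ θ ∂ν, 0 < Sstar θ)
    (α β T_R T_V : ℝ)
    (hβ : 0 < β) (hβα : β ≤ α) (hα : α ≤ 1)
    (hTR : 0 < T_R) (hTRV : T_R < T_V)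
    (γ : ℝ → ℝ)
    (hγ : ∀ a : ℝ, γ a = if T_R < a ∧ a < T_V then α else if T_V ≤ a then β else 0) :
    (∀ x : ℝ, 0 < x →
        H ν γ Sstar x = (∫ θ, Sstar θ ∂ν) *
          (x * T_R + 1 / α - (1 / α - 1 / β) * Real.exp (-(x * α * (T_V - T_R)))))
    ∧ (MonotoneOn (H ν γ Sstar) (Set.Ioi (0 : ℝ)) ↔ α * (T_V - T_R) ≤ β * T_V)
    ∧ ((∀ a : ℝ, 0 < a → (∫ s in Set.Ioc (0 : ℝ) a, γ s) / a ≤ γ a)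
        ↔ α * (T_V - T_R) ≤ β * T_V) := by
  have hα0 : 0 < α := lt_of_lt_of_le hβ hβα
  set κ := ∫ θ, Sstar θ ∂ν with hκdef
  -- κ > 0
  have hκ : 0 < κ := by
    rw [hκdef]
    rw [integral_pos_iff_support_of_nonneg_ae (hSstar_pos.mono fun θ h => h.le) hSstar_int]
    by_contra h
    push_neg at h
    have h0 : ν (Function.support Sstar) = 0 := le_antisymm h (by positivity)
    have h1 : ∀ᵐ θ ∂ν, θ ∉ Function.support Sstar :=
      measure_eq_zero_iff_ae_notMem.mp h0
    have hne : ν ≠ 0 := IsProbabilityMeasure.ne_zero ν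
    haveI : NeZero ν := ⟨hne⟩
    obtain ⟨θ, hp, hn⟩ := (hSstar_pos.and h1).exists
    exact hn (Function.mem_support.2 (ne_of_gt hp))
  -- part (i)
  have part1 : ∀ x : ℝ, 0 < x →
      H ν γ Sstar x = κ *
        (x * T_R + 1 / α - (1 / α - 1 / β) * Real.exp (-(x * α * (T_V - T_R)))) := by
    intro x hx
    unfold H
    have hinner : ∀ c : ℝ, (∫ θ, Real.exp c * Sstar θ ∂ν)
        = Real.exp c * κ := fun c => integral_const_mul _ _
    simp only [Gval α β T_R T_V hTR hTRV γ hγ, hinner]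
    rw [integral_mul_const, expint α β T_R T_V hβ hα0 hTR hTRV x hx]
    field_simp
    ring
  refine ⟨part1, ?_, ?_⟩
  · -- part (ii)
    set f : ℝ → ℝ := fun x => κ *
      (x * T_R + 1 / α - (1 / α - 1 / β) * Real.exp (-(x * α * (T_V - T_R)))) with hfdef
    have hEq : EqOn (H ν γ Sstar) f (Ioi 0) := fun x hx => part1 x (mem_Ioi.1 hx)
    have hder : ∀ y : ℝ, HasDerivAt f
        (κ * (T_R + (1/α - 1/β) * (α*(T_V-T_R)) * Real.exp (-(y*α*(T_V-T_R))))) y := by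
      intro y
      have h1 : HasDerivAt (fun y : ℝ => -(y*α*(T_V-T_R))) (-(α*(T_V-T_R))) y := by
        simpa [mul_assoc] using ((hasDerivAt_id y).mul_const (α*(T_V-T_R))).fun_neg
      have h2 := h1.exp
      have hA : HasDerivAt (fun y : ℝ => y*T_R) T_R y := by
        simpa using (hasDerivAt_id y).mul_const T_R
      have h3 := ((hA.add_const (1/α)).fun_sub (h2.const_mul (1/α - 1/β))).const_mul κ
      convert h3 using 1
      · rfl
      · rfl
      · ring
    constructor
    · intro hmono
      have hmf : MonotoneOn f (Ioi 0) := fun a ha b hb hab => by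
        rw [← hEq ha, ← hEq hb]; exact hmono ha hb hab
      set φ : ℝ → ℝ := fun z => (1/α - 1/β) *
        (Real.exp (-(2*z*α*(T_V-T_R))) - Real.exp (-(z*α*(T_V-T_R)))) with hφdef
      have hφ0 : φ 0 = 0 := by simp [hφdef]
      have hineq : ∀ z ∈ Ioi (0:ℝ), φ z / z ≤ T_R := by
        intro z hz
        have hz' : (0:ℝ) < z := mem_Ioi.1 hz
        have h1 : f z ≤ f (2*z) := hmf hz (by simp [mem_Ioi]; linarith) (by linarith)
        have h2 : f (2*z) - f z = κ * (z*T_R - φ z) := by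
          simp only [hfdef, hφdef]; ring
        have h3 : 0 ≤ κ * (z*T_R - φ z) := by linarith
        have h4 : 0 ≤ z*T_R - φ z := nonneg_of_mul_nonneg_right h3 hκ
        rw [div_le_iff₀ hz']
        linarith
      have hdφ : HasDerivAt φ ((1/α - 1/β) * (-(2*α*(T_V-T_R)) + α*(T_V-T_R))) 0 := by
        have h1 : HasDerivAt (fun z : ℝ => -(2*z*α*(T_V-T_R))) (-(2*α*(T_V-T_R))) 0 := by
          simpa [mul_assoc] using ((hasDerivAt_id (0:ℝ)).const_mul 2 |>.mul_const
            (α*(T_V-T_R))).fun_neg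
        have h2 : HasDerivAt (fun z : ℝ => -(z*α*(T_V-T_R))) (-(α*(T_V-T_R))) 0 := by
          simpa [mul_assoc] using ((hasDerivAt_id (0:ℝ)).mul_const (α*(T_V-T_R))).fun_neg
        have h3 := (h1.exp.fun_sub h2.exp).const_mul (1/α - 1/β)
        convert h3 using 1
        · rfl
        · rfl
        · simp only [mul_zero, zero_mul, neg_zero, Real.exp_zero, mul_one]
          ring
      have hslope := hasDerivAt_iff_tendsto_slope.1 hdφ
      have h5 := hslope.mono_left
        (nhdsWithin_mono 0 (fun z hz => ne_of_gt (mem_Ioi.1 hz)))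
      have h6 : ∀ᶠ z in 𝓝[>] (0:ℝ), slope φ 0 z ≤ T_R := by
        refine eventually_nhdsWithin_of_forall (fun z hz => ?_)
        rw [slope_def_field]
        rw [hφ0]
        simpa using hineq z hz
      have h7 : (1/α - 1/β) * (-(2*α*(T_V-T_R)) + α*(T_V-T_R)) ≤ T_R :=
        le_of_tendsto h5 h6
      have h8 : (1/α - 1/β) * (-(2*α*(T_V-T_R)) + α*(T_V-T_R))
          = (α*(T_V-T_R) - β*(T_V-T_R))/β := by
        field_simp
        ring
      rw [h8, div_le_iff₀ hβ] at h7
      linarith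
    · intro hcond
      have key : 0 ≤ T_R + (1/α - 1/β)*(α*(T_V-T_R)) := by
        have h4 : T_R + (1/α - 1/β)*(α*(T_V-T_R)) = (β*T_V - α*(T_V-T_R))/β := by
          field_simp
          ring
        rw [h4]
        exact div_nonneg (by linarith) hβ.le
      have hmf : MonotoneOn f (Ioi 0) := by
        apply monotoneOn_of_deriv_nonneg (convex_Ioi 0)
        · exact fun y _ => (hder y).differentiableAt.continuousAt.continuousWithinAt
        · intro y _
          exact (hder y).differentiableAt.differentiableWithinAt
        · intro y hy
          rw [interior_Ioi] at hy
          rw [(hder y).deriv]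
          have hy' : (0:ℝ) < y := mem_Ioi.1 hy
          have he1 : Real.exp (-(y*α*(T_V-T_R))) ≤ 1 := by
            rw [← Real.exp_zero]
            apply Real.exp_le_exp.2
            have : 0 ≤ y*α*(T_V-T_R) := mul_nonneg (mul_nonneg hy'.le hα0.le) (by linarith)
            linarith
          have hc : (1/α - 1/β) * (α*(T_V-T_R)) ≤ 0 := by
            apply mul_nonpos_of_nonpos_of_nonneg
            · have : 1/α ≤ 1/β := one_div_le_one_div_of_le hβ hβα
              linarith
            · nlinarith
          have hexp : 0 < Real.exp (-(y*α*(T_V-T_R))) := Real.exp_pos _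
          apply mul_nonneg hκ.le
          nlinarith
      intro a ha b hb hab
      rw [hEq ha, hEq hb]
      exact hmf ha hb hab
  · -- part (iii)
    constructor
    · intro h
      have hTV0 : (0:ℝ) < T_V := lt_trans hTR hTRV
      have := h T_V hTV0
      rw [Gval α β T_R T_V hTR hTRV γ hγ, hγ] at this
      rw [if_neg (not_le.2 hTRV), if_neg (lt_irrefl T_V), if_neg (by simp [lt_irrefl]),
        if_pos le_rfl] at this
      rw [div_le_iff₀ hTV0] at this
      nlinarith
    · intro hcond a ha
      rw [Gval α β T_R T_V hTR hTRV γ hγ, hγ]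
      rcases le_or_gt a T_R with h | h
      · rw [if_pos h, if_neg (by rintro ⟨h1, _⟩; linarith), if_neg (by intro h1; linarith)]
        simp
      · rcases lt_or_ge a T_V with h2 | h2
        · rw [if_neg (not_le.2 h), if_pos h2, if_pos ⟨h, h2⟩, div_le_iff₀ ha]
          nlinarith
        · rw [if_neg (not_le.2 h), if_neg (not_lt.2 h2),
            if_neg (by rintro ⟨_, h1⟩; linarith), if_pos h2, div_le_iff₀ ha]
          nlinarith

end Stmt11
end

section
/- For every t ≥ 0 and every φ ∈ L¹(da ⊗ ν), the function T¹_*(t)(φ)(a,θ) = 1_{a ≥ t}·φ(a−t,θ)·exp(−𝔉_* ∫_0^t γ(a−t+r,θ) dr) satisfies ‖T¹_*(t)(φ)‖_{L¹(da⊗ν)} ≤ e^{𝔉_* σ a_*}·e^{−𝔉_* σ t}·‖φ‖_{L¹(da⊗ν)}. -/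
open MeasureTheory Set

namespace Stmt13

/-- The measure `da ⊗ ν` on `ℝ₊ × Θ`. -/
noncomputable def ageProd {Θ : Type*} [MeasurableSpace Θ] (ν : Measure Θ) :
    Measure (ℝ × Θ) :=
  (volume.restrict (Set.Ioi (0 : ℝ))).prod ν

/-- Lower bound on the absorption integral. -/
lemma key_int {Θ : Type*} [MeasurableSpace Θ]
    (γ : ℝ → Θ → ℝ)
    (hγ_meas : Measurable fun p : ℝ × Θ => γ p.1 p.2)
    (hγ_nonneg : ∀ a θ, 0 ≤ γ a θ)
    (hγ_le_one : ∀ a θ, γ a θ ≤ 1)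
    (σ astar : ℝ) (hσ_pos : 0 < σ) (hastar : 0 < astar)
    (hγ_lower : ∀ a θ, astar < a → σ ≤ γ a θ)
    (θ : Θ) (s t : ℝ) (hs : 0 ≤ s) (ht : 0 ≤ t) :
    σ * (t - astar) ≤ ∫ r in Set.Ioc (0 : ℝ) t, γ (s + r) θ := by
  have hmeas' : Measurable fun r : ℝ => γ (s + r) θ :=
    hγ_meas.comp ((measurable_const.add measurable_id).prodMk measurable_const)
  have hint : IntegrableOn (fun r => γ (s + r) θ) (Set.Ioc 0 t) := by
    refine Integrable.mono' (integrable_const (1 : ℝ))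
      hmeas'.aestronglyMeasurable.restrict ?_
    filter_upwards with r
    rw [Real.norm_eq_abs, abs_of_nonneg (hγ_nonneg _ _)]
    exact hγ_le_one _ _
  have hind : IntegrableOn ((Set.Ioi (astar - s)).indicator fun _ => σ) (Set.Ioc 0 t) := by
    exact (integrableOn_const measure_Ioc_lt_top.ne).indicator measurableSet_Ioi
  have hmono : ∀ r, (Set.Ioi (astar - s)).indicator (fun _ => σ) r ≤ γ (s + r) θ := by
    intro r
    by_cases h : r ∈ Set.Ioi (astar - s)
    · rw [Set.indicator_of_mem h]
      exact hγ_lower _ _ (by simp only [Set.mem_Ioi] at h; linarith)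
    · rw [Set.indicator_of_notMem h]
      exact hγ_nonneg _ _
  have h1 : (∫ r in Set.Ioc (0 : ℝ) t, (Set.Ioi (astar - s)).indicator (fun _ => σ) r)
      ≤ ∫ r in Set.Ioc (0 : ℝ) t, γ (s + r) θ :=
    setIntegral_mono hind hint hmono
  refine le_trans ?_ h1
  rw [setIntegral_indicator measurableSet_Ioi, setIntegral_const, Set.Ioc_inter_Ioi,
    Real.volume_real_Ioc, smul_eq_mul]
  have h2 : max (0 : ℝ) (astar - s) ≤ astar := max_le (le_of_lt hastar) (by linarith)
  have h3 : t - astar ≤ max (t - max 0 (astar - s)) 0 := by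
    have : t - astar ≤ t - max 0 (astar - s) := by
      have := max_le_max (le_refl (0:ℝ)) (sub_le_self astar hs)
      linarith [h2]
    exact le_trans this (le_max_left _ _)
  calc σ * (t - astar) ≤ σ * max (t - max 0 (astar - s)) 0 := by
        exact mul_le_mul_of_nonneg_left h3 (le_of_lt hσ_pos)
    _ = max (t - 0 ⊔ (astar - s)) 0 * σ := by rw [mul_comm]

/-- Exponential decay of the `L¹` norm of
`T¹_*(t)(φ)(a,θ) = 1_{a ≥ t} φ(a−t,θ) exp(−𝔉_* ∫_0^t γ(a−t+r,θ) dr)`: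
`‖T¹_*(t)(φ)‖ ≤ e^{𝔉_* σ a_*} e^{−𝔉_* σ t} ‖φ‖`. -/
theorem T1_decay {Θ : Type*} [MeasurableSpace Θ]
    (ν : Measure Θ) [IsProbabilityMeasure ν]
    (γ : ℝ → Θ → ℝ)
    (hγ_meas : Measurable fun p : ℝ × Θ => γ p.1 p.2)
    (hγ_nonneg : ∀ a θ, 0 ≤ γ a θ)
    (hγ_le_one : ∀ a θ, γ a θ ≤ 1)
    (σ astar : ℝ) (hσ_pos : 0 < σ) (hσ_le : σ ≤ 1) (hastar : 0 < astar)
    (hγ_lower : ∀ a θ, astar < a → σ ≤ γ a θ)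
    (Fstar : ℝ) (hFstar : 0 < Fstar)
    (t : ℝ) (ht : 0 ≤ t)
    (φ : ℝ × Θ → ℝ) (hφ : Integrable φ (ageProd ν)) :
    (∫ p, |if t ≤ p.1 then
        φ (p.1 - t, p.2) * Real.exp (-(Fstar * ∫ r in Set.Ioc (0 : ℝ) t, γ (p.1 - t + r) p.2))
      else 0| ∂(ageProd ν))
    ≤ Real.exp (Fstar * σ * astar) * Real.exp (-(Fstar * σ * t)) *
        ∫ p, |φ p| ∂(ageProd ν) := by
  set C : ℝ := Real.exp (Fstar * σ * astar) * Real.exp (-(Fstar * σ * t)) with hC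
  have hCpos : 0 < C := mul_pos (Real.exp_pos _) (Real.exp_pos _)
  set g : ℝ × Θ → ℝ := fun p => if t ≤ p.1 then |φ (p.1 - t, p.2)| else 0 with hg
  -- pointwise bound
  have hpt : ∀ p : ℝ × Θ,
      |if t ≤ p.1 then
        φ (p.1 - t, p.2) * Real.exp (-(Fstar * ∫ r in Set.Ioc (0 : ℝ) t, γ (p.1 - t + r) p.2))
      else 0| ≤ C * g p := by
    intro p
    by_cases h : t ≤ p.1
    · simp only [hg, if_pos h, abs_mul, Real.abs_exp]
      rw [mul_comm C _]
      refine mul_le_mul_of_nonneg_left ?_ (abs_nonneg _)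
      have hs : 0 ≤ p.1 - t := by linarith
      have hI := key_int γ hγ_meas hγ_nonneg hγ_le_one σ astar hσ_pos hastar hγ_lower
        p.2 (p.1 - t) t hs ht
      have : -(Fstar * ∫ r in Set.Ioc (0 : ℝ) t, γ (p.1 - t + r) p.2)
          ≤ Fstar * σ * astar + -(Fstar * σ * t) := by
        have h2 : Fstar * (σ * (t - astar)) ≤
            Fstar * ∫ r in Set.Ioc (0 : ℝ) t, γ (p.1 - t + r) p.2 :=
          mul_le_mul_of_nonneg_left hI (le_of_lt hFstar)
        nlinarith
      calc Real.exp (-(Fstar * ∫ r in Set.Ioc (0 : ℝ) t, γ (p.1 - t + r) p.2))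
          ≤ Real.exp (Fstar * σ * astar + -(Fstar * σ * t)) := Real.exp_le_exp.mpr this
        _ = C := by rw [Real.exp_add]
    · simp only [hg, if_neg h, abs_zero, mul_zero, le_refl]
  -- measure-preserving translation
  have hf_mp : MeasurePreserving (fun p : ℝ × Θ => (p.1 + t, p.2))
      (ageProd ν) ((volume.restrict (Set.Ioi t)).prod ν) := by
    have h1 : MeasurePreserving (· + t)
        (volume.restrict ((· + t) ⁻¹' Set.Ioi t)) (volume.restrict (Set.Ioi t)) :=
      (measurePreserving_add_right volume t).restrict_preimage measurableSet_Ioi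
    have hpre : ((· + t) ⁻¹' Set.Ioi t : Set ℝ) = Set.Ioi 0 := by
      ext x; simp [Set.mem_Ioi]
    rw [hpre] at h1
    exact h1.prod (MeasurePreserving.id ν)
  have hf_emb : MeasurableEmbedding (fun p : ℝ × Θ => (p.1 + t, p.2)) :=
    (measurableEmbedding_addRight t).prodMap MeasurableEmbedding.id
  -- rewrite g as an indicator
  have hg_ind : g = Set.indicator (Set.Ici t ×ˢ (Set.univ : Set Θ))
      (fun p : ℝ × Θ => |φ (p.1 - t, p.2)|) := by
    funext p
    simp only [hg, Set.indicator_apply, Set.mem_prod, Set.mem_Ici, Set.mem_univ, and_true]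
  have hSmeas : MeasurableSet (Set.Ici t ×ˢ (Set.univ : Set Θ)) :=
    measurableSet_Ici.prod MeasurableSet.univ
  -- the restricted measure identity
  have hres : (ageProd ν).restrict (Set.Ici t ×ˢ (Set.univ : Set Θ))
      = (volume.restrict (Set.Ioi t)).prod ν := by
    rw [ageProd, ← Measure.prod_restrict, Measure.restrict_univ,
      Measure.restrict_restrict measurableSet_Ici]
    congr 1
    refine Measure.restrict_congr_set ?_
    rw [MeasureTheory.ae_eq_set]
    constructor
    · refine measure_mono_null (fun x hx => ?_) (Real.volume_singleton (a := t))
      obtain ⟨⟨hx1, hx2⟩, hx3⟩ := hx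
      simp only [Set.mem_Ici] at hx1
      simp only [Set.mem_Ioi, not_lt] at hx3
      simp only [Set.mem_singleton_iff]
      linarith
    · have hempty : Set.Ioi t \ (Set.Ici t ∩ Set.Ioi 0) = ∅ := by
        ext x
        constructor
        · rintro ⟨hx1, hx2⟩
          exact absurd ⟨Set.mem_Ici.mpr (le_of_lt hx1), Set.mem_Ioi.mpr (lt_of_le_of_lt ht hx1)⟩ hx2
        · intro hx
          exact absurd hx (Set.notMem_empty x)
      rw [hempty]
      exact measure_empty
  -- integral of g
  have hint_g : Integrable g (ageProd ν) := by
    rw [hg_ind, integrable_indicator_iff hSmeas]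
    rw [IntegrableOn, hres]
    rw [← hf_mp.integrable_comp_emb hf_emb]
    have heq : ((fun p : ℝ × Θ => |φ (p.1 - t, p.2)|) ∘ fun p : ℝ × Θ => (p.1 + t, p.2))
        = fun p => |φ p| := by
      funext p; simp only [Function.comp_apply, add_sub_cancel_right]
    rw [heq]
    exact hφ.abs
  have hg_int_eq : (∫ p, g p ∂(ageProd ν)) = ∫ p, |φ p| ∂(ageProd ν) := by
    rw [hg_ind, integral_indicator hSmeas]
    have h1 : (∫ p in Set.Ici t ×ˢ (Set.univ : Set Θ), |φ (p.1 - t, p.2)| ∂(ageProd ν))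
        = ∫ p, |φ (p.1 - t, p.2)| ∂((volume.restrict (Set.Ioi t)).prod ν) := by
      rw [← hres]
    rw [h1, ← hf_mp.integral_comp hf_emb (fun p : ℝ × Θ => |φ (p.1 - t, p.2)|)]
    norm_num
  have hmain := integral_mono_of_nonneg
    (ae_of_all _ fun p => abs_nonneg _) (hint_g.const_mul C) (ae_of_all _ hpt)
  rw [integral_const_mul, hg_int_eq] at hmain
  exact hmain

end Stmt13
end

section
/- Let ρ > 0, a_* > 0, λ_* > 0, and set R₀ = λ_*(1 − e^{−ρ a_*})/ρ. Assume R₀ > 1 and λ_* ≤ 2ρ e^{ρ a_*}. Then for all x ≥ 0 and y ∈ ℝ: 1 + (R₀ − 2)·(λ_*/R₀)·∫_0^{a_*} e^{−(x+ρ)a} cos(ya) da ≠ 0. -/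
open MeasureTheory Set

namespace Stmt16

private lemma integral_exp_mul_real {c : ℝ} (hc : c ≠ 0) (b : ℝ) :
    ∫ a in (0:ℝ)..b, Real.exp (c * a) = (Real.exp (c * b) - 1) / c := by
  have h : ∀ a : ℝ, HasDerivAt (fun t => Real.exp (c * t) / c) (Real.exp (c * a)) a := by
    intro a
    have h1 : HasDerivAt (fun t : ℝ => c * t) c a := by
      simpa using (hasDerivAt_id a).const_mul c
    have h2 := h1.exp
    have h3 := h2.div_const c
    simpa [mul_div_assoc, mul_div_cancel_right₀ _ hc] using h3
  have := intervalIntegral.integral_eq_sub_of_hasDerivAt (f := fun t => Real.exp (c * t) / c)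
    (fun a _ => h a) ((Real.continuous_exp.comp (continuous_const.mul continuous_id)).intervalIntegrable 0 b)
  rw [this]
  simp [sub_div]

private lemma quad_pos {r K Es s : ℝ} (hK : 0 < K) (h : K * Es ^ 2 < 4 * s) :
    0 < r ^ 2 - K * Es * r + K * s := by
  nlinarith [sq_nonneg (2 * r - K * Es), mul_lt_mul_of_pos_left h hK]

/-- Key real-analytic estimate in the proof of local stability for the SIS-type model:
for `R₀ = λ_*(1 − e^{−ρ a_*})/ρ > 1` and `λ_* ≤ 2ρ e^{ρ a_*}`, the quantity
`1 + (R₀ − 2)(λ_*/R₀) ∫_0^{a_*} e^{−(x+ρ)a} cos(ya) da` never vanishes for `x ≥ 0`, `y ∈ ℝ`. -/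
theorem no_root {ρ astar lamStar R0 : ℝ}
    (hρ : 0 < ρ) (hastar : 0 < astar) (hlamStar : 0 < lamStar)
    (hR0 : R0 = lamStar * (1 - Real.exp (-ρ * astar)) / ρ)
    (hR0_gt : 1 < R0)
    (hlam_le : lamStar ≤ 2 * ρ * Real.exp (ρ * astar)) :
    ∀ x : ℝ, 0 ≤ x → ∀ y : ℝ,
      1 + (R0 - 2) * (lamStar / R0) *
          (∫ a in Set.Ioc (0 : ℝ) astar, Real.exp (-(x + ρ) * a) * Real.cos (y * a)) ≠ 0 := by
  intro x hx y
  have hR0_pos : 0 < R0 := zero_lt_one.trans hR0_gt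
  obtain ⟨s, hs_def⟩ : ∃ s : ℝ, s = x + ρ := ⟨_, rfl⟩
  have hs_pos : 0 < s := by rw [hs_def]; positivity
  obtain ⟨I, hI_def⟩ : ∃ I : ℝ,
      I = ∫ a in Set.Ioc (0 : ℝ) astar, Real.exp (-s * a) * Real.cos (y * a) := ⟨_, rfl⟩
  obtain ⟨E, hE_def⟩ : ∃ E : ℝ, E = Real.exp (-ρ * astar) := ⟨_, rfl⟩
  rw [← hE_def] at hR0
  have hE_pos : 0 < E := hE_def ▸ Real.exp_pos _
  have hE_lt : E < 1 := by
    rw [hE_def, Real.exp_lt_one_iff]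
    nlinarith
  have hcont : Continuous (fun a : ℝ => Real.exp (-s * a) * Real.cos (y * a)) := by
    continuity
  have hIoc : I = ∫ a in (0:ℝ)..astar, Real.exp (-s * a) * Real.cos (y * a) := by
    rw [hI_def, intervalIntegral.integral_of_le hastar.le]
  -- crude bound |I| ≤ (1 - E)/ρ
  have hIabs : |I| ≤ (1 - E) / ρ := by
    rw [hIoc]
    have h1 := intervalIntegral.abs_integral_le_integral_abs
      (f := fun a : ℝ => Real.exp (-s * a) * Real.cos (y * a)) (μ := volume) hastar.le
    have h2 : (∫ a in (0:ℝ)..astar, |Real.exp (-s * a) * Real.cos (y * a)|) ≤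
        ∫ a in (0:ℝ)..astar, Real.exp (-ρ * a) := by
      apply intervalIntegral.integral_mono_on hastar.le
      · exact (hcont.abs).intervalIntegrable 0 astar
      · exact (Real.continuous_exp.comp (continuous_const.mul continuous_id)).intervalIntegrable 0 astar
      · intro a ha
        have ha0 : 0 ≤ a := ha.1
        have hcos : |Real.cos (y * a)| ≤ 1 := Real.abs_cos_le_one _
        have hexp : Real.exp (-s * a) ≤ Real.exp (-ρ * a) := by
          apply Real.exp_le_exp.2
          rw [hs_def]
          nlinarith
        calc |Real.exp (-s * a) * Real.cos (y * a)|
            = Real.exp (-s * a) * |Real.cos (y * a)| := by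
              rw [abs_mul, abs_of_pos (Real.exp_pos _)]
          _ ≤ Real.exp (-s * a) * 1 :=
              mul_le_mul_of_nonneg_left hcos (Real.exp_pos _).le
          _ ≤ Real.exp (-ρ * a) := by simpa using hexp
    have h3 : (∫ a in (0:ℝ)..astar, Real.exp (-ρ * a)) = (1 - E) / ρ := by
      rw [integral_exp_mul_real (c := -ρ) (by linarith) astar, hE_def,
        div_eq_div_iff (by linarith : (-ρ:ℝ) ≠ 0) (ne_of_gt hρ)]
      ring
    linarith
  have hkey : lamStar * (1 - E) = R0 * ρ := by
    rw [hR0, div_mul_cancel₀ _ (ne_of_gt hρ)]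
  obtain ⟨L, hL_def⟩ : ∃ L : ℝ, L = lamStar / R0 := ⟨_, rfl⟩
  have hL_pos : 0 < L := by rw [hL_def]; exact div_pos hlamStar hR0_pos
  have hL1 : L * (1 - E) = ρ := by
    rw [hL_def, div_mul_eq_mul_div, hkey, mul_comm, mul_div_assoc,
      div_self (ne_of_gt hR0_pos), mul_one]
  suffices h : 0 < 1 + (R0 - 2) * L * I by
    rw [hL_def, hI_def, hs_def] at h
    exact ne_of_gt h
  rcases le_or_gt R0 2 with hcase | hcase
  · -- easy case : R0 ≤ 2
    have hd : 0 ≤ (2 - R0) * L := mul_nonneg (by linarith) hL_pos.le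
    have h1 : (2 - R0) * L * |I| ≤ (2 - R0) * L * ((1 - E) / ρ) :=
      mul_le_mul_of_nonneg_left hIabs hd
    have hL2 : L * ((1 - E) / ρ) = 1 := by
      rw [← mul_div_assoc, hL1, div_self (ne_of_gt hρ)]
    have h2 : (2 - R0) * L * ((1 - E) / ρ) = 2 - R0 := by
      rw [mul_assoc, hL2, mul_one]
    have h3 : (2 - R0) * L * I ≤ (2 - R0) * L * |I| :=
      mul_le_mul_of_nonneg_left (le_abs_self I) hd
    have hrel : (R0 - 2) * L * I = -((2 - R0) * L * I) := by ring
    linarith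
  · -- hard case : R0 > 2
    obtain ⟨K, hK_def⟩ : ∃ K : ℝ, K = (R0 - 2) * L := ⟨_, rfl⟩
    have hK_pos : 0 < K := by
      rw [hK_def]; exact mul_pos (by linarith) hL_pos
    obtain ⟨z, hz_def⟩ : ∃ z : ℂ, z = -(s : ℂ) + (y : ℂ) * Complex.I := ⟨_, rfl⟩
    have hz_re : z.re = -s := by simp [hz_def]
    have hz_im : z.im = y := by simp [hz_def]
    have hz_ne : z ≠ 0 := by
      intro h
      rw [h] at hz_re
      simp at hz_re
      linarith
    obtain ⟨r, hr_def⟩ : ∃ r : ℝ, r = Real.sqrt (s ^ 2 + y ^ 2) := ⟨_, rfl⟩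
    have hr_pos : 0 < r := by
      rw [hr_def]
      exact Real.sqrt_pos.2 (by nlinarith [sq_nonneg y])
    have hr_sq : r ^ 2 = s ^ 2 + y ^ 2 := by
      rw [hr_def]; exact Real.sq_sqrt (by positivity)
    have habs_z : ‖z‖ = r := by
      rw [Complex.norm_def, Complex.normSq_apply, hz_re, hz_im, hr_def]
      congr 1
      ring
    obtain ⟨Es, hEs_def⟩ : ∃ Es : ℝ, Es = Real.exp (-s * astar) := ⟨_, rfl⟩
    have hEs_pos : 0 < Es := hEs_def ▸ Real.exp_pos _
    -- compute I via complex exponential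
    have hpt : ∀ a : ℝ, Real.exp (-s * a) * Real.cos (y * a) = (Complex.exp (z * a)).re := by
      intro a
      rw [Complex.exp_re]
      congr 2
      · simp [Complex.mul_re, hz_re, hz_im]
      · simp [Complex.mul_im, hz_re, hz_im]
    have hint_c : IntegrableOn (fun a : ℝ => Complex.exp (z * a)) (Set.Ioc (0:ℝ) astar) volume :=
      (Complex.continuous_exp.comp (continuous_const.mul Complex.continuous_ofReal)).integrableOn_Ioc
    have hI_formula : I = ((Complex.exp (z * astar) - 1) / z).re := by
      have h1 : I = ∫ a in Set.Ioc (0:ℝ) astar, (Complex.exp (z * a)).re := by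
        rw [hI_def]
        exact integral_congr_ae (Filter.Eventually.of_forall (fun a => hpt a))
      have h2 : (∫ a in Set.Ioc (0:ℝ) astar, (Complex.exp (z * a)).re) =
          (∫ a in Set.Ioc (0:ℝ) astar, Complex.exp (z * a)).re := by
        have := integral_re (μ := volume.restrict (Set.Ioc (0:ℝ) astar))
          (f := fun a : ℝ => Complex.exp (z * a)) hint_c
        simpa using this
      have h3 : (∫ a in Set.Ioc (0:ℝ) astar, Complex.exp (z * a)) =
          ∫ a in (0:ℝ)..astar, Complex.exp (z * a) := by
        rw [intervalIntegral.integral_of_le hastar.le]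
      have h4 := integral_exp_mul_complex (a := 0) (b := astar) hz_ne
      rw [h1, h2, h3, h4]
      norm_num
    -- lower bound on I
    have habs_exp : ‖Complex.exp (z * astar)‖ = Es := by
      rw [Complex.norm_exp, hEs_def]
      congr 1
      simp [Complex.mul_re, hz_re, hz_im]
    have hre_inv : ((-1 : ℂ) / z).re = s / r ^ 2 := by
      rw [Complex.div_re]
      simp only [Complex.neg_re, Complex.one_re, Complex.neg_im, Complex.one_im,
        Complex.normSq_apply, hz_re, hz_im, hr_sq]
      ring
    have hre_main : -(Es / r) ≤ (Complex.exp (z * astar) / z).re := by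
      have h1 : |(Complex.exp (z * astar) / z).re| ≤ ‖Complex.exp (z * astar) / z‖ :=
        Complex.abs_re_le_norm _
      rw [norm_div, habs_exp, habs_z] at h1
      linarith [abs_le.1 h1 |>.1]
    have hI_lb : s / r ^ 2 - Es / r ≤ I := by
      rw [hI_formula]
      have heq : ((Complex.exp (z * astar) - 1) / z) =
          Complex.exp (z * astar) / z + (-1 : ℂ) / z := by
        rw [sub_eq_add_neg, add_div]
      rw [heq, Complex.add_re, hre_inv]
      linarith
    -- key inequality: K * Es^2 < 4 * s
    have hKlt : K < lamStar := by
      have hKe : K = lamStar * ((R0 - 2) / R0) := by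
        rw [hK_def, hL_def]; ring
      rw [hKe]
      have h1 : (R0 - 2) / R0 < 1 := by
        rw [div_lt_one hR0_pos]; linarith
      exact mul_lt_of_lt_one_right hlamStar h1
    have hEs_sq : Real.exp (ρ * astar) * Es ^ 2 = Real.exp ((ρ - 2 * s) * astar) := by
      rw [hEs_def, pow_two, ← Real.exp_add, ← Real.exp_add]
      congr 1
      ring
    have hdecay : Real.exp ((ρ - 2 * s) * astar) < 1 := by
      rw [Real.exp_lt_one_iff]
      rw [show ρ - 2 * s = -ρ - 2 * x by rw [hs_def]; ring]
      exact mul_neg_of_neg_of_pos (by linarith) hastar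
    have hquad_key : K * Es ^ 2 < 4 * s := by
      have h1 : K * Es ^ 2 ≤ 2 * ρ * Real.exp (ρ * astar) * Es ^ 2 :=
        mul_le_mul_of_nonneg_right
          (by linarith : K ≤ 2 * ρ * Real.exp (ρ * astar)) (sq_nonneg Es)
      have h2 : 2 * ρ * Real.exp (ρ * astar) * Es ^ 2 = 2 * ρ * Real.exp ((ρ - 2 * s) * astar) := by
        rw [← hEs_sq]; ring
      have h3 : 2 * ρ * Real.exp ((ρ - 2 * s) * astar) < 2 * ρ := by
        have := mul_lt_mul_of_pos_left hdecay (by linarith : (0:ℝ) < 2 * ρ)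
        simpa using this
      have h4 : 2 * ρ ≤ 2 * s := by rw [hs_def]; linarith
      linarith
    -- quadratic positivity : r^2 - K*Es*r + K*s > 0
    have hquad : 0 < r ^ 2 - K * Es * r + K * s := quad_pos hK_pos hquad_key
    -- conclude
    have h5 : 1 + K * (s / r ^ 2 - Es / r) = (r ^ 2 - K * Es * r + K * s) / r ^ 2 := by
      field_simp
      ring
    have h6 : 0 < 1 + K * (s / r ^ 2 - Es / r) := by
      rw [h5]
      positivity
    have h7 : K * (s / r ^ 2 - Es / r) ≤ K * I :=
      mul_le_mul_of_nonneg_left hI_lb hK_pos.le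
    have hrel : (R0 - 2) * L * I = K * I := by rw [hK_def]
    rw [hrel]
    linarith

end Stmt16
end
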